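/- arXiv:2202.01345 — 6 statements merged into one kernel-verified Lean document; each statement's English description precedes it below -/
import Mathlib

section
/- For every m ∈ 𝓜, every x ≥ 0 and every integer d ≥ 0 one has ((s•m•)^d s)(x) ≤ x·E^d_m(0;x); moreover for every integer d ≥ 1 one has ((m•(s•m•)^{d−1}) s)(x) ≤ E^d_m(0;x). -/
open MeasureTheory Filter Topology Set
open scoped ENNReal NNReal

structure MString where
  m : ℝ → ℝ
  strict_mono : StrictMonoOn m (Set.Ioi 0)
  right_cont : ∀ x : ℝ, 0 < x → ContinuousWithinAt m (Set.Ici x) x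
  μ : Measure ℝ
  stieltjes : ∀ a b : ℝ, 0 < a → a ≤ b → μ (Set.Ioc a b) = ENNReal.ofReal (m b - m a)
  int_fin : ∫⁻ x in Set.Ioc (0:ℝ) 1, ENNReal.ofReal x ∂μ < ⊤

namespace MString

noncomputable def F (S : MString) (x : ℝ) : ℝ := ∫ y in Set.Ioc (0:ℝ) x, y ∂S.μ

noncomputable def E (S : MString) (d : ℕ) (lam x : ℝ) : ℝ :=
  (1 / (d.factorial : ℝ)) * (S.F x) ^ d * Real.exp (lam * S.F x)

noncomputable def sBul (f : ℝ → ℝ) (x : ℝ) : ℝ := ∫ y in (0:ℝ)..x, f y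

noncomputable def mBul (S : MString) (f : ℝ → ℝ) (x : ℝ) : ℝ :=
  ∫ y in Set.Ioc (0:ℝ) x, f y ∂S.μ

noncomputable def smIter (S : MString) : ℕ → (ℝ → ℝ) → ℝ → ℝ
  | 0, f => f
  | (k+1), f => sBul (mBul S (smIter S k f))

noncomputable def msIter (S : MString) : ℕ → (ℝ → ℝ) → ℝ → ℝ
  | 0, f => f
  | (k+1), f => mBul S (sBul (msIter S k f))

noncomputable def psi (S : MString) (lam x : ℝ) : ℝ :=
  ∑' k : ℕ, lam ^ k * smIter S k id x

noncomputable def psiPlus (S : MString) (lam x : ℝ) : ℝ :=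
  1 + ∑' k : ℕ, lam ^ (k + 1) * mBul S (smIter S k id) x

noncomputable def g (S : MString) (lam x : ℝ) : ℝ :=
  psi S lam x * ∫ y in Set.Ioi x, (psi S lam y ^ 2)⁻¹

noncomputable def mtilde (S : MString) (x : ℝ) : ℝ := S.m x - S.m 1

noncomputable def jInt (S : MString) (f : ℝ → ℝ) (y : ℝ) : ℝ :=
  if y ≤ 1 then ∫ z in Set.Ioc y 1, f z ∂S.μ else - ∫ z in Set.Ioc 1 y, f z ∂S.μ

noncomputable def G (S : MString) : ℕ → ℝ → ℝ
  | 0 => fun _ => 0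
  | 1 => fun x => ∫ y in (0:ℝ)..x, mtilde S y
  | (k+2) => fun x => - ∫ y in (0:ℝ)..x, jInt S (G S (k+1)) y

noncomputable def GBig (S : MString) (x : ℝ) : ℝ := ∫ y in (0:ℝ)..x, S.m y

noncomputable def intGdm (S : MString) (k : ℕ) : ℝ≥0∞ :=
  ∫⁻ x in Set.Ioc (0:ℝ) 1, ENNReal.ofReal ((-1 : ℝ) ^ k * G S k x) ∂S.μ

open scoped Classical in
noncomputable def dIdx (S : MString) : ℕ∞ :=
  if BddBelow (S.m '' Set.Ioc (0:ℝ) 1) then 0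
  else sInf {n : ℕ∞ | ∃ k : ℕ, n = (k : ℕ∞) ∧ 1 ≤ k ∧ intGdm S k < ⊤}

noncomputable def phi (S : MString) (d : ℕ) (lam x : ℝ) : ℝ :=
  1 + (∑ k ∈ Finset.Icc 1 d, lam ^ k * G S k x)
    + ∑' k : ℕ, lam ^ (d + k + 1) * smIter S (k + 1) (G S d) x

noncomputable def c (S : MString) (d : ℕ) (lam : ℝ) : ℝ :=
  (phi S d lam 1 - g S lam 1) / psi S lam 1

noncomputable def Sd (S : MString) (d : ℕ) (x : ℝ) : ℝ :=
  sSup ((fun y => |mBul S (G S d) y|) '' Set.Icc 0 x)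

end MString


----------------------------------------------------------------
-- AUX START
namespace MString

/-- The symmetrization core lemma. -/
lemma core_lemma (ν : Measure ℝ) [IsFiniteMeasure ν] (k : ℕ) :
    (k + 1 : ℝ≥0∞) * ∫⁻ y, (ν (Set.Iio y)) ^ k ∂ν ≤ (ν Set.univ) ^ (k + 1) := by
  classical
  set P := Measure.pi (fun _ : Fin (k+1) => ν) with hP
  set A : Fin (k+1) → Set (Fin (k+1) → ℝ) :=
    fun i => {w | ∀ j, j ≠ i → w j < w i} with hA
  have hAmeas : ∀ i, MeasurableSet (A i) := by
    intro i
    have : A i = ⋂ j, {w : Fin (k+1) → ℝ | j ≠ i → w j < w i} := by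
      ext w; simp [hA, Set.mem_iInter]
    rw [this]
    refine MeasurableSet.iInter fun j => ?_
    by_cases h : j = i
    · simp [h]
    · have : {w : Fin (k+1) → ℝ | j ≠ i → w j < w i} = {w | w j < w i} := by
        ext w; simp [h]
      rw [this]
      exact measurableSet_lt (measurable_pi_apply j) (measurable_pi_apply i)
  have hdisj : Pairwise (Function.onFun Disjoint A) := by
    intro i j hij
    refine Set.disjoint_left.2 fun w hwi hwj => ?_
    exact lt_asymm (hwi j (Ne.symm hij)) (hwj i hij)
  have hAeq : ∀ i, P (A i) = P (A 0) := by
    intro i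
    have hmp := measurePreserving_piCongrLeft (fun _ : Fin (k+1) => ν) (Equiv.swap i 0)
    have him : (MeasurableEquiv.piCongrLeft (fun _ : Fin (k+1) => ℝ) (Equiv.swap i 0)) ⁻¹' (A i)
        = A 0 := by
      ext w
      simp only [hA, Set.mem_preimage, Set.mem_setOf_eq,
        MeasurableEquiv.coe_piCongrLeft, Equiv.piCongrLeft_apply, eq_rec_constant]
      constructor
      · intro h j hj
        have := h (Equiv.swap i 0 j) (by intro hc; exact hj (by simpa using (Equiv.swap i 0).injective (by simpa [Equiv.swap_apply_left] using hc)))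
        simpa [Equiv.symm_apply_apply, Equiv.swap_apply_left] using this
      · intro h j hj
        have hj' : (Equiv.swap i 0).symm j ≠ 0 := by
          intro hc
          apply hj
          have := congrArg (Equiv.swap i 0) hc
          simpa [Equiv.swap_apply_left] using this
        have := h _ hj'
        simpa [Equiv.swap_apply_left] using this
    calc P (A i)
        = P ((MeasurableEquiv.piCongrLeft (fun _ : Fin (k+1) => ℝ) (Equiv.swap i 0)) ⁻¹' (A i)) := by
          rw [← hmp.measure_preimage (hAmeas i).nullMeasurableSet]
      _ = P (A 0) := by rw [him]
  have hA0 : P (A 0) = ∫⁻ y, (ν (Set.Iio y)) ^ k ∂ν := by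
    have hmp := measurePreserving_piFinSuccAbove (fun _ : Fin (k+1) => ν) 0
    set B : Set (ℝ × (Fin k → ℝ)) := {p | ∀ j, p.2 j < p.1} with hB
    have hBmeas : MeasurableSet B := by
      have : B = ⋂ j, {p : ℝ × (Fin k → ℝ) | p.2 j < p.1} := by
        ext p; simp [hB, Set.mem_iInter]
      rw [this]
      exact MeasurableSet.iInter fun j =>
        measurableSet_lt (measurable_snd.eval) measurable_fst
    have hpre : (MeasurableEquiv.piFinSuccAbove (fun _ : Fin (k+1) => ℝ) 0) ⁻¹' B = A 0 := by
      ext w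
      simp only [hB, Set.mem_preimage, MeasurableEquiv.piFinSuccAbove_apply, Set.mem_setOf_eq, hA]
      constructor
      · intro h j hj
        obtain ⟨j', rfl⟩ := Fin.exists_succ_eq.2 hj
        simpa [Fin.succAbove, Fin.tail] using h j'
      · intro h j
        have := h (Fin.succAbove 0 j) (Fin.succAbove_ne 0 j)
        simpa [Fin.succAbove, Fin.tail] using this
    have h1 : P (A 0) = (ν.prod (Measure.pi fun _ : Fin k => ν)) B := by
      rw [← hpre, hmp.measure_preimage hBmeas.nullMeasurableSet]
    rw [h1, Measure.prod_apply hBmeas]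
    congr 1
    ext y
    have : Prod.mk y ⁻¹' B = Set.pi Set.univ (fun _ : Fin k => Set.Iio y) := by
      ext w; simp [hB]
    rw [this, Measure.pi_pi]
    simp
  have h1 : P (⋃ i, A i) = ∑ i : Fin (k+1), P (A i) := by
    rw [measure_iUnion hdisj hAmeas, tsum_fintype]
  have h2 : ∑ i : Fin (k+1), P (A i) = (k+1 : ℝ≥0∞) * ∫⁻ y, (ν (Set.Iio y)) ^ k ∂ν := by
    simp only [hAeq, hA0, Finset.sum_const, Finset.card_univ, Fintype.card_fin, nsmul_eq_mul]
    push_cast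
    ring
  have h3 : P (⋃ i, A i) ≤ P Set.univ := measure_mono (Set.subset_univ _)
  have h4 : P Set.univ = (ν Set.univ) ^ (k+1) := by
    rw [hP, Measure.pi_univ]; simp
  rw [← h2, ← h1, ← h4]; exact h3

noncomputable def nuX (S : MString) : Measure ℝ := S.μ.withDensity fun y => ENNReal.ofReal y

lemma nuX_apply (S : MString) {s : Set ℝ} (hs : MeasurableSet s) :
    S.nuX s = ∫⁻ y in s, ENNReal.ofReal y ∂S.μ := withDensity_apply _ hs

lemma nuX_Ioc_lt_top (S : MString) (x : ℝ) : S.nuX (Set.Ioc 0 x) < ⊤ := by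
  rcases le_total x 1 with h | h
  · exact lt_of_le_of_lt (measure_mono (Set.Ioc_subset_Ioc_right h))
      (by rw [nuX_apply _ measurableSet_Ioc]; exact S.int_fin)
  · have hsplit : Set.Ioc (0:ℝ) x = Set.Ioc 0 1 ∪ Set.Ioc 1 x :=
      (Set.Ioc_union_Ioc_eq_Ioc (by norm_num) h).symm
    rw [hsplit]
    refine lt_of_le_of_lt (measure_union_le _ _) (ENNReal.add_lt_top.2 ⟨?_, ?_⟩)
    · rw [nuX_apply _ measurableSet_Ioc]; exact S.int_fin
    · rw [nuX_apply _ measurableSet_Ioc]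
      calc ∫⁻ y in Set.Ioc (1:ℝ) x, ENNReal.ofReal y ∂S.μ
          ≤ ∫⁻ _ in Set.Ioc (1:ℝ) x, ENNReal.ofReal x ∂S.μ := by
            refine setLIntegral_mono measurable_const fun y hy => ?_
            exact ENNReal.ofReal_le_ofReal hy.2
        _ = ENNReal.ofReal x * S.μ (Set.Ioc 1 x) := by
            rw [setLIntegral_const]
        _ < ⊤ := by
            rw [S.stieltjes 1 x one_pos h]
            exact ENNReal.mul_lt_top ENNReal.ofReal_lt_top ENNReal.ofReal_lt_top

lemma nuX_Ioo_lt_top (S : MString) (x : ℝ) : S.nuX (Set.Ioo 0 x) < ⊤ :=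
  lt_of_le_of_lt (measure_mono Set.Ioo_subset_Ioc_self) (S.nuX_Ioc_lt_top x)

lemma F_eq (S : MString) (x : ℝ) : S.F x = (S.nuX (Set.Ioc 0 x)).toReal := by
  rw [F, nuX_apply _ measurableSet_Ioc]
  rw [integral_eq_lintegral_of_nonneg_ae ?_ ?_]
  · exact (ae_restrict_iff' measurableSet_Ioc).2 (ae_of_all _ fun y hy => hy.1.le)
  · exact measurable_id.aestronglyMeasurable

/-- `Gl` : left-continuous cumulative mass. -/
noncomputable def Gl (S : MString) (x : ℝ) : ℝ := (S.nuX (Set.Ioo 0 x)).toReal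

lemma Gl_nonneg (S : MString) (x : ℝ) : 0 ≤ S.Gl x := ENNReal.toReal_nonneg

lemma Gl_le_F (S : MString) (x : ℝ) : S.Gl x ≤ S.F x := by
  rw [F_eq]
  exact ENNReal.toReal_mono (S.nuX_Ioc_lt_top x).ne (measure_mono Set.Ioo_subset_Ioc_self)

lemma F_le_Gl (S : MString) {z x : ℝ} (h : z < x) : S.F z ≤ S.Gl x := by
  rw [F_eq]
  refine ENNReal.toReal_mono (S.nuX_Ioo_lt_top x).ne (measure_mono ?_)
  exact fun y hy => ⟨hy.1, lt_of_le_of_lt hy.2 h⟩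

lemma key_ineq (S : MString) (x : ℝ) (k : ℕ) :
    (k + 1 : ℝ≥0∞) * ∫⁻ y in Set.Ioc (0:ℝ) x, (S.nuX (Set.Ioo 0 y)) ^ k ∂S.nuX
      ≤ (S.nuX (Set.Ioc 0 x)) ^ (k + 1) := by
  have : IsFiniteMeasure (S.nuX.restrict (Set.Ioc 0 x)) :=
    ⟨by rw [Measure.restrict_apply_univ]; exact S.nuX_Ioc_lt_top x⟩
  have hcore := core_lemma (S.nuX.restrict (Set.Ioc 0 x)) k
  have huniv : (S.nuX.restrict (Set.Ioc 0 x)) Set.univ = S.nuX (Set.Ioc 0 x) := by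
    rw [Measure.restrict_apply_univ]
  rw [huniv] at hcore
  refine le_trans (le_of_eq ?_) hcore
  congr 1
  refine setLIntegral_congr_fun measurableSet_Ioc (fun y hy => ?_)
  congr 1
  rw [Measure.restrict_apply measurableSet_Iio]
  congr 1
  ext z
  simp only [Set.mem_inter_iff, Set.mem_Iio, Set.mem_Ioc, Set.mem_Ioo]
  exact ⟨fun h => ⟨h.2, h.1, h.2.le.trans hy.2⟩, fun h => ⟨h.2.1, h.1⟩⟩

end MString
-- AUX END

namespace MString

lemma mBul_of_nonpos (S : MString) (f : ℝ → ℝ) {x : ℝ} (hx : x ≤ 0) : mBul S f x = 0 := by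
  rw [mBul, Set.Ioc_eq_empty (by exact not_lt.2 hx), Measure.restrict_empty,
    integral_zero_measure]

lemma lintegral_nuX (S : MString) {s : Set ℝ} (hs : MeasurableSet s) {g : ℝ → ℝ≥0∞}
    (hg : Measurable g) :
    ∫⁻ y in s, g y ∂S.nuX = ∫⁻ y in s, ENNReal.ofReal y * g y ∂S.μ := by
  rw [nuX, restrict_withDensity hs,
    lintegral_withDensity_eq_lintegral_mul _ ENNReal.measurable_ofReal hg]
  rfl

lemma stepB (S : MString) (d : ℕ) (f : ℝ → ℝ) (hf : Measurable f)
    (hnn : ∀ y : ℝ, 0 ≤ y → 0 ≤ f y)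
    (hbd : ∀ y : ℝ, 0 ≤ y → f y ≤ y * S.Gl y ^ d / d.factorial) :
    (∀ x, 0 ≤ mBul S f x) ∧ Monotone (mBul S f) ∧
      (∀ x, mBul S f x ≤ S.F x ^ (d+1) / (d+1).factorial) := by
  classical
  have hfacpos : (0:ℝ) < d.factorial := by exact_mod_cast d.factorial_pos
  set c : ℝ≥0∞ := ENNReal.ofReal d.factorial with hc
  have hc0 : c ≠ 0 := (ENNReal.ofReal_pos.2 hfacpos).ne'
  have hcinv : c⁻¹ ≠ ⊤ := by simp [hc0]
  set L : ℝ → ℝ≥0∞ := fun x => ∫⁻ y in Set.Ioc (0:ℝ) x, ENNReal.ofReal (f y) ∂S.μ with hL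
  have hrep : ∀ x, mBul S f x = (L x).toReal := by
    intro x
    rw [mBul, integral_eq_lintegral_of_nonneg_ae
      ((ae_restrict_iff' measurableSet_Ioc).2 (ae_of_all _ fun y hy => hnn y hy.1.le))
      hf.aestronglyMeasurable]
  have hgmeas : Measurable fun y : ℝ => (S.nuX (Set.Ioo 0 y)) ^ d := by
    refine Measurable.pow_const ?_ d
    exact Monotone.measurable (fun a b hab => measure_mono (Set.Ioo_subset_Ioo_right hab))
  have hLbound : ∀ x, L x ≤ (S.nuX (Set.Ioc 0 x)) ^ (d+1) / (d+1) * c⁻¹ := by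
    intro x
    have step1 : L x ≤ ∫⁻ y in Set.Ioc (0:ℝ) x,
        ENNReal.ofReal y * ((S.nuX (Set.Ioo 0 y)) ^ d * c⁻¹) ∂S.μ := by
      refine setLIntegral_mono (by measurability) fun y hy => ?_
      have h1 : ENNReal.ofReal (f y) ≤ ENNReal.ofReal (y * S.Gl y ^ d / d.factorial) :=
        ENNReal.ofReal_le_ofReal (hbd y hy.1.le)
      refine h1.trans (le_of_eq ?_)
      rw [mul_div_assoc, div_eq_mul_inv, ENNReal.ofReal_mul hy.1.le,
        ENNReal.ofReal_mul (pow_nonneg (S.Gl_nonneg y) d), ENNReal.ofReal_pow (S.Gl_nonneg y),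
        ENNReal.ofReal_inv_of_pos hfacpos]
      congr 2
      rw [Gl, ENNReal.ofReal_toReal (S.nuX_Ioo_lt_top y).ne]
    have step2 : ∫⁻ y in Set.Ioc (0:ℝ) x,
        ENNReal.ofReal y * ((S.nuX (Set.Ioo 0 y)) ^ d * c⁻¹) ∂S.μ
        = (∫⁻ y in Set.Ioc (0:ℝ) x, (S.nuX (Set.Ioo 0 y)) ^ d ∂S.nuX) * c⁻¹ := by
      rw [← S.lintegral_nuX measurableSet_Ioc (hgmeas.mul_const _),
        lintegral_mul_const' _ _ hcinv]
    have step3 : (∫⁻ y in Set.Ioc (0:ℝ) x, (S.nuX (Set.Ioo 0 y)) ^ d ∂S.nuX)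
        ≤ (S.nuX (Set.Ioc 0 x)) ^ (d+1) / (d+1) := by
      rw [ENNReal.le_div_iff_mul_le (Or.inl (by exact_mod_cast (Nat.succ_ne_zero d)))
        (Or.inl (by simp))]
      rw [mul_comm]
      have := S.key_ineq x d
      refine le_trans (le_of_eq ?_) this
      push_cast
      ring
    calc L x ≤ _ := step1
      _ = _ := step2
      _ ≤ ((S.nuX (Set.Ioc 0 x)) ^ (d+1) / (d+1)) * c⁻¹ := mul_le_mul_left step3 _
  have hRfin : ∀ x, (S.nuX (Set.Ioc 0 x)) ^ (d+1) / (d+1) * c⁻¹ ≠ ⊤ := by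
    intro x
    refine ENNReal.mul_ne_top (ENNReal.div_lt_top (ENNReal.pow_ne_top (S.nuX_Ioc_lt_top x).ne) (by simp)).ne hcinv
  refine ⟨fun x => by rw [hrep]; exact ENNReal.toReal_nonneg, ?_, ?_⟩
  · intro a b hab
    rw [hrep, hrep]
    refine ENNReal.toReal_mono (ne_top_of_le_ne_top (hRfin b) (hLbound b)) ?_
    exact lintegral_mono' (Measure.restrict_mono (Set.Ioc_subset_Ioc_right hab) le_rfl) le_rfl
  · intro x
    rw [hrep]
    refine le_trans (ENNReal.toReal_mono (hRfin x) (hLbound x)) ?_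
    have hnat : ((d : ℝ≥0∞) + 1).toReal = (d : ℝ) + 1 := by
      rw [show ((d : ℝ≥0∞) + 1) = ((d + 1 : ℕ) : ℝ≥0∞) by push_cast; ring, ENNReal.toReal_natCast]
      push_cast; ring
    rw [ENNReal.toReal_mul, ENNReal.toReal_div, ENNReal.toReal_pow, hnat,
      ENNReal.toReal_inv, hc, ENNReal.toReal_ofReal d.factorial.cast_nonneg, ← F_eq,
      ← div_eq_mul_inv, div_div]
    apply le_of_eq
    congr 1
    push_cast [Nat.factorial_succ]
    ring

end MString

namespace MString

lemma F_nonneg (S : MString) (x : ℝ) : 0 ≤ S.F x := by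
  rw [F_eq]; exact ENNReal.toReal_nonneg

lemma stepA (S : MString) (d : ℕ) (g : ℝ → ℝ)
    (hg0 : ∀ z : ℝ, z ≤ 0 → g z = 0) (hgnn : ∀ z : ℝ, 0 ≤ g z) (hgmono : Monotone g)
    (hgbd : ∀ z : ℝ, g z ≤ S.F z ^ (d+1) / (d+1).factorial) :
    Monotone (sBul g) ∧ (∀ y : ℝ, 0 ≤ y → 0 ≤ sBul g y) ∧
      (∀ y : ℝ, 0 ≤ y → sBul g y ≤ y * S.Gl y ^ (d+1) / (d+1).factorial) := by
  have hrep : ∀ x : ℝ, sBul g x = ∫ z in Set.Ioc (0:ℝ) x, g z := by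
    intro x
    rcases le_total 0 x with h | h
    · exact intervalIntegral.integral_of_le h
    · have h1 : sBul g x = ∫ z in (0:ℝ)..x, (0:ℝ) := by
        refine intervalIntegral.integral_congr fun z hz => ?_
        refine hg0 z ?_
        rcases Set.mem_uIcc.1 hz with h' | h'
        · linarith [h'.2]
        · linarith [h'.2]
      rw [h1, intervalIntegral.integral_zero,
        Set.Ioc_eq_empty (by exact not_lt.2 h), Measure.restrict_empty, integral_zero_measure]
  have hint : ∀ x : ℝ, IntegrableOn g (Set.Ioc 0 x) volume := by
    intro x
    refine Integrable.mono'
      (show IntegrableOn (fun _ : ℝ => g x) (Set.Ioc 0 x) volume from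
        integrableOn_const measure_Ioc_lt_top.ne)
      hgmono.measurable.aestronglyMeasurable ?_
    refine (ae_restrict_iff' measurableSet_Ioc).2 (ae_of_all _ fun z hz => ?_)
    rw [Real.norm_eq_abs, abs_of_nonneg (hgnn z)]
    exact hgmono hz.2
  refine ⟨?_, ?_, ?_⟩
  · intro a b hab
    rw [hrep, hrep]
    exact setIntegral_mono_set (hint b) (ae_of_all _ hgnn)
      (HasSubset.Subset.eventuallyLE (Set.Ioc_subset_Ioc_right hab))
  · intro y _
    rw [hrep]
    exact setIntegral_nonneg measurableSet_Ioc fun z _ => hgnn z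
  · intro y hy
    have hfac : (0:ℝ) < (d+1).factorial := by exact_mod_cast (d+1).factorial_pos
    rw [hrep, integral_Ioc_eq_integral_Ioo]
    have hb : ∫ z in Set.Ioo (0:ℝ) y, g z
        ≤ ∫ _ in Set.Ioo (0:ℝ) y, (S.Gl y ^ (d+1) / (d+1).factorial) := by
      refine setIntegral_mono_on ((hint y).mono_set Set.Ioo_subset_Ioc_self)
        (integrableOn_const measure_Ioo_lt_top.ne) measurableSet_Ioo fun z hz => ?_
      refine (hgbd z).trans ?_
      exact (div_le_div_iff_of_pos_right hfac).2 (pow_le_pow_left₀ (S.F_nonneg z) (S.F_le_Gl hz.2) _)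
    refine hb.trans ?_
    rw [setIntegral_const, Real.volume_real_Ioo_of_le hy, sub_zero, smul_eq_mul]
    rw [mul_div_assoc]

lemma master (S : MString) : ∀ d : ℕ,
    Monotone (smIter S d id) ∧ (∀ y : ℝ, 0 ≤ y → 0 ≤ smIter S d id y) ∧
      (∀ y : ℝ, 0 ≤ y → smIter S d id y ≤ y * S.Gl y ^ d / d.factorial) := by
  intro d
  induction d with
  | zero => exact ⟨monotone_id, fun y hy => hy, fun y hy => by simp [smIter]⟩
  | succ d ih =>
    obtain ⟨h1, h2, h3⟩ := ih
    obtain ⟨b1, b2, b3⟩ := S.stepB d _ h1.measurable h2 h3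
    have hst : smIter S (d+1) id = sBul (mBul S (smIter S d id)) := rfl
    rw [hst]
    exact S.stepA d _ (fun z hz => S.mBul_of_nonpos _ hz) b1 b2 b3

lemma E_zero (S : MString) (d : ℕ) (x : ℝ) : E S d 0 x = S.F x ^ d / d.factorial := by
  rw [E, zero_mul, Real.exp_zero, mul_one]; ring

end MString

theorem stmt0 (S : MString) :
    (∀ x : ℝ, 0 ≤ x → ∀ d : ℕ, MString.smIter S d id x ≤ x * MString.E S d 0 x) ∧
    (∀ x : ℝ, 0 ≤ x → ∀ d : ℕ, 1 ≤ d →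
      MString.mBul S (MString.smIter S (d - 1) id) x ≤ MString.E S d 0 x) := by
  constructor
  · intro x hx d
    have h3 := (S.master d).2.2 x hx
    refine h3.trans ?_
    rw [MString.E_zero]
    calc x * S.Gl x ^ d / d.factorial ≤ x * S.F x ^ d / d.factorial := by
          gcongr
          exacts [S.Gl_nonneg x, S.Gl_le_F x]
      _ = x * (S.F x ^ d / d.factorial) := by ring
  · intro x hx d hd
    obtain ⟨h1, h2, h3⟩ := S.master (d-1)
    have hb := (S.stepB (d-1) _ h1.measurable h2 h3).2.2 x
    have hd1 : d - 1 + 1 = d := Nat.succ_pred_eq_of_pos hd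
    rw [hd1] at hb
    rw [MString.E_zero]
    exact hb
end

section
/- Let m ∈ 𝓜. Then for every integer k ≥ 2 the function G^k_m(x) is finite for every x ≥ 0; moreover, for every integer k ≥ 1, the function (−1)^k G^k_m is finite, nonnegative and nondecreasing on [0,1]. -/
open MeasureTheory Filter Topology Set
open scoped ENNReal NNReal

section Aux
open MString

variable (S : MString)

lemma m_mono : MonotoneOn S.m (Set.Ioi 0) := S.strict_mono.monotoneOn

lemma mtilde_mono : MonotoneOn (mtilde S) (Set.Ioi 0) :=
  fun _ ha _ hb hab => sub_le_sub_right (m_mono S ha hb hab) _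

lemma mu_Ioc_lt_top {a b : ℝ} (ha : 0 < a) : S.μ (Set.Ioc a b) < ⊤ := by
  rcases le_or_gt a b with h | h
  · rw [S.stieltjes a b ha h]; exact ENNReal.ofReal_lt_top
  · rw [Set.Ioc_eq_empty (not_lt.mpr h.le)]; simp

lemma mtilde_nonpos {y : ℝ} (hy : y ∈ Set.Ioc (0:ℝ) 1) : mtilde S y ≤ 0 :=
  sub_nonpos.2 (m_mono S hy.1 (Set.mem_Ioi.2 one_pos) hy.2)

lemma lint_mtilde_fin :
    ∫⁻ y in Set.Ioc (0:ℝ) 1, ENNReal.ofReal (S.m 1 - S.m y) < ⊤ := by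
  set μ' := S.μ.restrict (Set.Ioc (0:ℝ) 1) with hμ'
  have key : ∫⁻ z, ENNReal.ofReal z ∂μ' = ∫⁻ t in Set.Ioi (0:ℝ), μ' {a : ℝ | t < a} := by
    refine lintegral_eq_lintegral_meas_lt μ' ?_ aemeasurable_id
    exact (ae_restrict_iff' measurableSet_Ioc).2 (Filter.Eventually.of_forall fun z hz => hz.1.le)
  have hpt : ∀ y ∈ Set.Ioc (0:ℝ) 1, ENNReal.ofReal (S.m 1 - S.m y) = μ' {a : ℝ | y < a} := by
    intro y hy
    have : {a : ℝ | y < a} = Set.Ioi y := rfl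
    rw [this, hμ', Measure.restrict_apply measurableSet_Ioi]
    have hset : Set.Ioi y ∩ Set.Ioc 0 1 = Set.Ioc y 1 := by
      rw [Set.inter_comm, Set.Ioc_inter_Ioi, max_eq_right hy.1.le]
    rw [hset, S.stieltjes y 1 hy.1 hy.2]
  calc ∫⁻ y in Set.Ioc (0:ℝ) 1, ENNReal.ofReal (S.m 1 - S.m y)
      = ∫⁻ y in Set.Ioc (0:ℝ) 1, μ' {a : ℝ | y < a} := by
        refine setLIntegral_congr_fun measurableSet_Ioc ?_
        exact hpt
    _ ≤ ∫⁻ t in Set.Ioi (0:ℝ), μ' {a : ℝ | t < a} :=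
        lintegral_mono_set (fun y hy => hy.1)
    _ = ∫⁻ z, ENNReal.ofReal z ∂μ' := key.symm
    _ < ⊤ := S.int_fin

lemma integrableOn_mtilde_Ioc01 : IntegrableOn (mtilde S) (Set.Ioc (0:ℝ) 1) volume := by
  constructor
  · exact (aemeasurable_restrict_of_monotoneOn measurableSet_Ioc
      ((mtilde_mono S).mono Set.Ioc_subset_Ioi_self)).aestronglyMeasurable
  · rw [hasFiniteIntegral_iff_norm]
    have hcg : ∫⁻ y in Set.Ioc (0:ℝ) 1, ENNReal.ofReal ‖mtilde S y‖
        = ∫⁻ y in Set.Ioc (0:ℝ) 1, ENNReal.ofReal (S.m 1 - S.m y) := by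
      refine setLIntegral_congr_fun measurableSet_Ioc ?_
      intro y hy
      dsimp only
      rw [Real.norm_eq_abs, abs_of_nonpos (mtilde_nonpos S hy), mtilde, neg_sub]
    rw [hcg]
    exact lint_mtilde_fin S

lemma integrableOn_mtilde_Ioc {a b : ℝ} (ha : 0 < a) :
    IntegrableOn (mtilde S) (Set.Ioc a b) volume := by
  rcases le_or_gt b a with h | h
  · rw [Set.Ioc_eq_empty (not_lt.mpr h)]; exact integrableOn_empty
  · have hsub : Set.Ioc a b ⊆ Set.Ioi (0:ℝ) := fun y hy => ha.trans hy.1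
    refine Integrable.mono'
      (g := fun _ => max |mtilde S a| |mtilde S b|)
      (integrableOn_const measure_Ioc_lt_top.ne) ?_ ?_
    · exact (aemeasurable_restrict_of_monotoneOn measurableSet_Ioc
        ((mtilde_mono S).mono hsub)).aestronglyMeasurable
    · refine (ae_restrict_iff' measurableSet_Ioc).2 (Filter.Eventually.of_forall ?_)
      intro y hy
      have h1 : mtilde S a ≤ mtilde S y := mtilde_mono S (Set.mem_Ioi.2 ha) (hsub hy) hy.1.le
      have h2 : mtilde S y ≤ mtilde S b := mtilde_mono S (hsub hy) (Set.mem_Ioi.2 (ha.trans h)) hy.2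
      rw [Real.norm_eq_abs]
      refine abs_le.2 ⟨?_, ?_⟩
      · calc -max |mtilde S a| |mtilde S b| ≤ -|mtilde S a| := by
              exact neg_le_neg (le_max_left _ _)
          _ ≤ mtilde S a := neg_abs_le _
          _ ≤ mtilde S y := h1
      · exact h2.trans ((le_abs_self _).trans (le_max_right _ _))

lemma conj1 : ∀ x : ℝ, 0 ≤ x → IntervalIntegrable (mtilde S) volume 0 x := by
  intro x hx
  rw [intervalIntegrable_iff_integrableOn_Ioc_of_le hx]
  rcases le_or_gt x 1 with h | h
  · exact (integrableOn_mtilde_Ioc01 S).mono_set (Set.Ioc_subset_Ioc_right h)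
  · have hdec : Set.Ioc (0:ℝ) x = Set.Ioc 0 1 ∪ Set.Ioc 1 x :=
      (Set.Ioc_union_Ioc_eq_Ioc zero_le_one h.le).symm
    rw [hdec]
    exact (integrableOn_mtilde_Ioc01 S).union (integrableOn_mtilde_Ioc S one_pos)

lemma contOn_primitive {f : ℝ → ℝ} (hf : ∀ x : ℝ, 0 ≤ x → IntervalIntegrable f volume 0 x) :
    ContinuousOn (fun x => ∫ t in (0:ℝ)..x, f t) (Set.Ici 0) := by
  intro x hx
  have hx' : (0:ℝ) ≤ x := hx
  have hint : IntegrableOn f (Set.Icc 0 (x+1)) volume := by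
    rw [integrableOn_Icc_iff_integrableOn_Ioc]
    exact (intervalIntegrable_iff_integrableOn_Ioc_of_le (by linarith)).1
      (hf (x+1) (by linarith))
  have hcont := intervalIntegral.continuousOn_primitive (a := 0) (b := x+1) (μ := volume) hint
  have h1 : ContinuousWithinAt (fun u => ∫ t in Set.Ioc (0:ℝ) u, f t) (Set.Icc 0 (x+1)) x :=
    hcont x ⟨hx', by linarith⟩
  have h2 : ContinuousWithinAt (fun u => ∫ t in Set.Ioc (0:ℝ) u, f t) (Set.Ici 0) x := by
    refine h1.mono_of_mem_nhdsWithin ?_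
    rw [mem_nhdsWithin]
    exact ⟨Set.Iio (x+1), isOpen_Iio, Set.mem_Iio.2 (by linarith),
      fun y hy => ⟨hy.2, hy.1.le⟩⟩
  refine h2.congr (fun y hy => ?_) ?_
  · exact intervalIntegral.integral_of_le hy
  · exact intervalIntegral.integral_of_le hx'

lemma integrableOn_of_contOn {f : ℝ → ℝ} (hf : ContinuousOn f (Set.Ici 0))
    (a b : ℝ) (ha : 0 < a) : IntegrableOn f (Set.Ioc a b) S.μ := by
  rcases le_or_gt b a with h | h
  · rw [Set.Ioc_eq_empty (not_lt.mpr h)]; exact integrableOn_empty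
  · have hsub : Set.Icc a b ⊆ Set.Ici (0:ℝ) := fun y hy => ha.le.trans hy.1
    obtain ⟨C, hC⟩ := isCompact_Icc.exists_bound_of_continuousOn (hf.mono hsub)
    refine Integrable.mono' (g := fun _ => C)
      (integrableOn_const (mu_Ioc_lt_top S ha).ne) ?_ ?_
    · exact ((hf.mono (Set.Ioc_subset_Icc_self.trans hsub)).aestronglyMeasurable
        measurableSet_Ioc)
    · exact (ae_restrict_iff' measurableSet_Ioc).2
        (Filter.Eventually.of_forall fun y hy => hC y (Set.Ioc_subset_Icc_self hy))

lemma jInt_eq_of_le {f : ℝ → ℝ} {y : ℝ} (h : y ≤ 1) :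
    jInt S f y = ∫ z in Set.Ioc y 1, f z ∂S.μ := if_pos h

lemma jInt_eq_of_gt {f : ℝ → ℝ} {y : ℝ} (h : 1 < y) :
    jInt S f y = - ∫ z in Set.Ioc 1 y, f z ∂S.μ := if_neg (not_le.mpr h)

lemma conj3aux {f : ℝ → ℝ} (hc : ContinuousOn f (Set.Ici 0))
    (hint : ∀ a b : ℝ, 0 < a → IntegrableOn f (Set.Ioc a b) S.μ) :
    ∀ x : ℝ, 0 ≤ x → IntervalIntegrable (jInt S f) volume 0 x := by
  set fp : ℝ → ℝ := fun z => max (f z) 0 with hfp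
  set fn : ℝ → ℝ := fun z => max (-f z) 0 with hfn
  -- Part A : integrable on Ioc 0 1
  have hmeasA : AEMeasurable (jInt S f) (volume.restrict (Set.Ioc (0:ℝ) 1)) := by
    have hp : AntitoneOn (fun y => ∫ z in Set.Ioc y 1, fp z ∂S.μ) (Set.Ioc (0:ℝ) 1) := by
      intro y hy y' hy' hle
      refine setIntegral_mono_set (hint y 1 hy.1).pos_part ?_ ?_
      · exact (ae_restrict_iff' measurableSet_Ioc).2
          (Filter.Eventually.of_forall fun z _ => le_max_right _ _)
      · exact HasSubset.Subset.eventuallyLE (Set.Ioc_subset_Ioc_left hle)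
    have hn : AntitoneOn (fun y => ∫ z in Set.Ioc y 1, fn z ∂S.μ) (Set.Ioc (0:ℝ) 1) := by
      intro y hy y' hy' hle
      refine setIntegral_mono_set (hint y 1 hy.1).neg_part ?_ ?_
      · exact (ae_restrict_iff' measurableSet_Ioc).2
          (Filter.Eventually.of_forall fun z _ => le_max_right _ _)
      · exact HasSubset.Subset.eventuallyLE (Set.Ioc_subset_Ioc_left hle)
    have hg : AEMeasurable (fun y => (∫ z in Set.Ioc y 1, fp z ∂S.μ)
        - ∫ z in Set.Ioc y 1, fn z ∂S.μ) (volume.restrict (Set.Ioc (0:ℝ) 1)) :=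
      (aemeasurable_restrict_of_antitoneOn measurableSet_Ioc hp).sub
        (aemeasurable_restrict_of_antitoneOn measurableSet_Ioc hn)
    refine hg.congr ?_
    refine (ae_restrict_iff' measurableSet_Ioc).2 (Filter.Eventually.of_forall ?_)
    intro y hy
    dsimp only
    have hfi := hint y 1 hy.1
    rw [jInt_eq_of_le S hy.2, ← integral_sub hfi.pos_part hfi.neg_part]
    exact integral_congr_ae (Filter.Eventually.of_forall fun z =>
      max_zero_sub_max_neg_zero_eq_self (f z))
  have hA : IntegrableOn (jInt S f) (Set.Ioc (0:ℝ) 1) volume := by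
    obtain ⟨C, hC⟩ := isCompact_Icc.exists_bound_of_continuousOn
      (hc.mono (Set.Icc_subset_Ici_self : Set.Icc (0:ℝ) 1 ⊆ Set.Ici 0))
    refine Integrable.mono' (((integrableOn_mtilde_Ioc01 S).norm).const_mul C)
      hmeasA.aestronglyMeasurable ?_
    refine (ae_restrict_iff' measurableSet_Ioc).2 (Filter.Eventually.of_forall ?_)
    intro y hy
    have hb : ‖∫ z in Set.Ioc y 1, f z ∂S.μ‖ ≤ C * (S.μ (Set.Ioc y 1)).toReal := by
      refine norm_setIntegral_le_of_norm_le_const (mu_Ioc_lt_top S hy.1)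
        ?_
      exact fun z hz => hC z ⟨(hy.1.trans hz.1).le, hz.2⟩
    have htr : (S.μ (Set.Ioc y 1)).toReal = S.m 1 - S.m y := by
      rw [S.stieltjes y 1 hy.1 hy.2,
        ENNReal.toReal_ofReal (sub_nonneg.2 (m_mono S hy.1 (Set.mem_Ioi.2 one_pos) hy.2))]
    have hnm : ‖mtilde S y‖ = S.m 1 - S.m y := by
      rw [Real.norm_eq_abs, abs_of_nonpos (mtilde_nonpos S hy), mtilde, neg_sub]
    rw [jInt_eq_of_le S hy.2]
    calc ‖∫ z in Set.Ioc y 1, f z ∂S.μ‖ ≤ C * (S.μ (Set.Ioc y 1)).toReal := hb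
      _ = C * ‖mtilde S y‖ := by rw [htr, hnm]
  -- Part B : integrable on Ioc 1 x
  have hB : ∀ x : ℝ, 1 < x → IntegrableOn (jInt S f) (Set.Ioc (1:ℝ) x) volume := by
    intro x hx
    have hmeasB : AEMeasurable (jInt S f) (volume.restrict (Set.Ioc (1:ℝ) x)) := by
      have hp : MonotoneOn (fun y => ∫ z in Set.Ioc (1:ℝ) y, fp z ∂S.μ) (Set.Ioc (1:ℝ) x) := by
        intro y hy y' hy' hle
        refine setIntegral_mono_set (hint 1 y' one_pos).pos_part ?_ ?_
        · exact (ae_restrict_iff' measurableSet_Ioc).2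
            (Filter.Eventually.of_forall fun z _ => le_max_right _ _)
        · exact HasSubset.Subset.eventuallyLE (Set.Ioc_subset_Ioc_right hle)
      have hn : MonotoneOn (fun y => ∫ z in Set.Ioc (1:ℝ) y, fn z ∂S.μ) (Set.Ioc (1:ℝ) x) := by
        intro y hy y' hy' hle
        refine setIntegral_mono_set (hint 1 y' one_pos).neg_part ?_ ?_
        · exact (ae_restrict_iff' measurableSet_Ioc).2
            (Filter.Eventually.of_forall fun z _ => le_max_right _ _)
        · exact HasSubset.Subset.eventuallyLE (Set.Ioc_subset_Ioc_right hle)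
      have hg : AEMeasurable (fun y => (∫ z in Set.Ioc (1:ℝ) y, fn z ∂S.μ)
          - ∫ z in Set.Ioc (1:ℝ) y, fp z ∂S.μ) (volume.restrict (Set.Ioc (1:ℝ) x)) :=
        (aemeasurable_restrict_of_monotoneOn measurableSet_Ioc hn).sub
          (aemeasurable_restrict_of_monotoneOn measurableSet_Ioc hp)
      refine hg.congr ?_
      refine (ae_restrict_iff' measurableSet_Ioc).2 (Filter.Eventually.of_forall ?_)
      intro y hy
      dsimp only
      have hfi := hint 1 y one_pos
      have hsplit : (∫ z in Set.Ioc (1:ℝ) y, fp z ∂S.μ)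
          - ∫ z in Set.Ioc (1:ℝ) y, fn z ∂S.μ = ∫ z in Set.Ioc (1:ℝ) y, f z ∂S.μ := by
        rw [← integral_sub hfi.pos_part hfi.neg_part]
        exact integral_congr_ae (Filter.Eventually.of_forall fun z =>
          max_zero_sub_max_neg_zero_eq_self (f z))
      rw [jInt_eq_of_gt S hy.1, ← hsplit]
      ring
    obtain ⟨C, hC⟩ := isCompact_Icc.exists_bound_of_continuousOn
      (hc.mono (Set.Icc_subset_Ici_self : Set.Icc (0:ℝ) x ⊆ Set.Ici 0))
    have hC0 : 0 ≤ C := (norm_nonneg (f 1)).trans (hC 1 ⟨zero_le_one, hx.le⟩)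
    refine Integrable.mono' (g := fun _ => C * (S.μ (Set.Ioc (1:ℝ) x)).toReal)
      (integrableOn_const measure_Ioc_lt_top.ne)
      hmeasB.aestronglyMeasurable ?_
    refine (ae_restrict_iff' measurableSet_Ioc).2 (Filter.Eventually.of_forall ?_)
    intro y hy
    rw [jInt_eq_of_gt S hy.1, norm_neg]
    have hb : ‖∫ z in Set.Ioc (1:ℝ) y, f z ∂S.μ‖ ≤ C * (S.μ (Set.Ioc (1:ℝ) y)).toReal := by
      refine norm_setIntegral_le_of_norm_le_const (mu_Ioc_lt_top S one_pos)
        ?_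
      exact fun z hz => hC z ⟨zero_le_one.trans hz.1.le, hz.2.trans hy.2⟩
    refine hb.trans (mul_le_mul_of_nonneg_left ?_ hC0)
    exact ENNReal.toReal_mono (mu_Ioc_lt_top S one_pos).ne
      (measure_mono (Set.Ioc_subset_Ioc_right hy.2))
  intro x hx
  rw [intervalIntegrable_iff_integrableOn_Ioc_of_le hx]
  rcases le_or_gt x 1 with h | h
  · exact hA.mono_set (Set.Ioc_subset_Ioc_right h)
  · have hdec : Set.Ioc (0:ℝ) x = Set.Ioc 0 1 ∪ Set.Ioc 1 x :=
      (Set.Ioc_union_Ioc_eq_Ioc zero_le_one h.le).symm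
    rw [hdec]
    exact hA.union (hB x h)

lemma G_zero (k : ℕ) : G S k 0 = 0 := by
  match k with
  | 0 => rfl
  | 1 => exact intervalIntegral.integral_same
  | (k+2) =>
    show -∫ y in (0:ℝ)..0, jInt S (G S (k+1)) y = 0
    rw [intervalIntegral.integral_same, neg_zero]

lemma main (S : MString) : ∀ n : ℕ,
    ContinuousOn (G S (n+1)) (Set.Ici 0) ∧
    MonotoneOn (fun x => (-1:ℝ)^(n+1) * G S (n+1) x) (Set.Icc 0 1) := by
  intro n
  induction n with
  | zero =>
    constructor
    · exact contOn_primitive (conj1 S)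
    · intro x hx y hy hxy
      show (-1:ℝ)^1 * G S 1 x ≤ (-1:ℝ)^1 * G S 1 y
      have hx1 : G S 1 x = ∫ t in (0:ℝ)..x, mtilde S t := rfl
      have hy1 : G S 1 y = ∫ t in (0:ℝ)..y, mtilde S t := rfl
      have i1 : IntervalIntegrable (mtilde S) volume 0 x := conj1 S x hx.1
      have ixy : IntervalIntegrable (mtilde S) volume x y := by
        refine (conj1 S y hy.1).mono_set ?_
        rw [Set.uIcc_of_le hxy, Set.uIcc_of_le hy.1]
        exact Set.Icc_subset_Icc hx.1 le_rfl
      have hadd := intervalIntegral.integral_add_adjacent_intervals i1 ixy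
      have key : (∫ t in x..y, mtilde S t) ≤ 0 := by
        rw [intervalIntegral.integral_of_le hxy]
        refine setIntegral_nonpos measurableSet_Ioc ?_
        intro z hz
        exact mtilde_nonpos S ⟨hx.1.trans_lt hz.1, hz.2.trans hy.2⟩
      rw [hx1, hy1, ← hadd]
      simp only [pow_one]
      linarith
  | succ n ih =>
    have hjj : ∀ x : ℝ, 0 ≤ x → IntervalIntegrable (jInt S (G S (n+1))) volume 0 x :=
      conj3aux S ih.1 (fun a b ha => integrableOn_of_contOn S ih.1 a b ha)
    constructor
    · have : ContinuousOn (fun x => ∫ t in (0:ℝ)..x, jInt S (G S (n+1)) t) (Set.Ici 0) :=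
        contOn_primitive hjj
      exact this.neg
    · intro x hx y hy hxy
      show (-1:ℝ)^(n+1+1) * G S (n+2) x ≤ (-1:ℝ)^(n+1+1) * G S (n+2) y
      have i1 : IntervalIntegrable (jInt S (G S (n+1))) volume 0 x := hjj x hx.1
      have ixy : IntervalIntegrable (jInt S (G S (n+1))) volume x y := by
        refine (hjj y hy.1).mono_set ?_
        rw [Set.uIcc_of_le hxy, Set.uIcc_of_le hy.1]
        exact Set.Icc_subset_Icc hx.1 le_rfl
      have hadd := intervalIntegral.integral_add_adjacent_intervals i1 ixy
      have key : 0 ≤ (-1:ℝ)^(n+1) * ∫ t in x..y, jInt S (G S (n+1)) t := by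
        rw [intervalIntegral.integral_of_le hxy, ← integral_const_mul]
        refine setIntegral_nonneg measurableSet_Ioc ?_
        intro t ht
        have ht0 : (0:ℝ) < t := lt_of_le_of_lt hx.1 ht.1
        have ht1 : t ≤ 1 := ht.2.trans hy.2
        rw [jInt_eq_of_le S ht1, ← integral_const_mul]
        refine setIntegral_nonneg measurableSet_Ioc ?_
        intro z hz
        have hz' : z ∈ Set.Icc (0:ℝ) 1 := ⟨(ht0.trans hz.1).le, hz.2⟩
        have h0m : (0:ℝ) ∈ Set.Icc (0:ℝ) 1 := ⟨le_rfl, zero_le_one⟩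
        have h0 := ih.2 h0m hz' hz'.1
        simp only [G_zero, mul_zero] at h0
        exact h0
      have hGx : G S (n+2) x = -∫ t in (0:ℝ)..x, jInt S (G S (n+1)) t := rfl
      have hGy : G S (n+2) y = -∫ t in (0:ℝ)..y, jInt S (G S (n+1)) t := rfl
      rw [hGx, hGy, ← hadd, pow_succ]
      linarith [key]

end Aux


theorem stmt2 (S : MString) :
    (∀ x : ℝ, 0 ≤ x → IntervalIntegrable (MString.mtilde S) MeasureTheory.volume 0 x) ∧
    (∀ k : ℕ, 1 ≤ k → ∀ a b : ℝ, 0 < a → IntegrableOn (MString.G S k) (Set.Ioc a b) S.μ) ∧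
    (∀ k : ℕ, 1 ≤ k → ∀ x : ℝ, 0 ≤ x →
      IntervalIntegrable (MString.jInt S (MString.G S k)) MeasureTheory.volume 0 x) ∧
    (∀ k : ℕ, 1 ≤ k → ∀ x ∈ Set.Icc (0:ℝ) 1, 0 ≤ (-1 : ℝ) ^ k * MString.G S k x) ∧
    (∀ k : ℕ, 1 ≤ k →
      MonotoneOn (fun x => (-1 : ℝ) ^ k * MString.G S k x) (Set.Icc (0:ℝ) 1)) := by
  refine ⟨conj1 S, ?_, ?_, ?_, ?_⟩
  · intro k hk a b ha
    obtain ⟨n, rfl⟩ := Nat.exists_eq_add_of_le' hk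
    exact integrableOn_of_contOn S (main S n).1 a b ha
  · intro k hk x hx
    obtain ⟨n, rfl⟩ := Nat.exists_eq_add_of_le' hk
    exact conj3aux S (main S n).1
      (fun a b ha => integrableOn_of_contOn S (main S n).1 a b ha) x hx
  · intro k hk x hx
    obtain ⟨n, rfl⟩ := Nat.exists_eq_add_of_le' hk
    have h0 := (main S n).2 ⟨le_rfl, zero_le_one⟩ hx hx.1
    simp only [G_zero, mul_zero] at h0
    exact h0
  · intro k hk
    obtain ⟨n, rfl⟩ := Nat.exists_eq_add_of_le' hk
    exact (main S n).2
end

section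
/- Let m ∈ 𝓜 with d(m) < ∞ and let d be an integer with d ≥ max(d(m),1). Set S^d_m(x) = sup_{y∈[0,x]} |∫_{(0,y]} G^d_m(z) dm(z)|. Then for every integer k ≥ 1, every x ≥ 0 and every λ > 0: |((s•m•)^k G^d_m)(x)| ≤ x S^d_m(x) E^{k−1}_m(0;x); |((m•s•)^{k−1}(m•G^d_m))(x)| ≤ S^d_m(x) E^{k−1}_m(0;x); and |φ^d_m(λ;x) − 1 − Σ_{k=1}^d λ^k G^k_m(x)| ≤ x λ^{d+1} S^d_m(x) E^0_m(λ;x). -/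
open MeasureTheory Filter Topology Set
open scoped ENNReal NNReal

lemma prim_cont {q : ℝ → ℝ}
    (hq : ∀ a b : ℝ, 0 < a → 0 < b → IntervalIntegrable q volume a b)
    (hbd : ∀ a b : ℝ, 0 < a → a ≤ b → ∃ C, ∀ w ∈ Set.Icc a b, |q w| ≤ C) :
    ContinuousOn (fun z => ∫ w in (0:ℝ)..z, q w) (Set.Ioi 0) := by
  intro z₀ hz₀
  simp only [Set.mem_Ioi] at hz₀
  by_cases h0 : IntervalIntegrable q volume 0 z₀
  · obtain ⟨C, hC⟩ := hbd (z₀/2) (z₀ + 1) (by linarith) (by linarith)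
    have hC0 : 0 ≤ C := le_trans (abs_nonneg _) (hC z₀ ⟨by linarith, by linarith⟩)
    have hII : ∀ z ∈ Set.Icc (z₀/2) (z₀+1), IntervalIntegrable q volume 0 z := by
      intro z hz
      exact h0.trans (hq z₀ z hz₀ (by linarith [hz.1]))
    have hlip : LipschitzOnWith (Real.toNNReal C)
        (fun z => ∫ w in (0:ℝ)..z, q w) (Set.Icc (z₀/2) (z₀+1)) := by
      rw [lipschitzOnWith_iff_dist_le_mul]
      intro z hz z' hz'
      rw [Real.dist_eq, Real.dist_eq]
      have hdiff : (∫ w in (0:ℝ)..z, q w) - ∫ w in (0:ℝ)..z', q w = ∫ w in z'..z, q w :=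
        intervalIntegral.integral_interval_sub_left (hII z hz) (hII z' hz')
      rw [hdiff]
      have : ∀ w ∈ Set.uIoc z' z, ‖q w‖ ≤ C := by
        intro w hw
        apply hC
        have : Set.uIoc z' z ⊆ Set.Icc (z₀/2) (z₀+1) :=
          Set.uIoc_subset_uIcc.trans (Set.uIcc_subset_Icc hz' hz)
        exact this hw
      have := intervalIntegral.norm_integral_le_of_norm_le_const this
      rw [Real.norm_eq_abs] at this
      calc |∫ w in z'..z, q w| ≤ C * |z - z'| := this
        _ = (Real.toNNReal C) * |z - z'| := by rw [Real.coe_toNNReal _ hC0]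
    have hco : ContinuousAt (fun z => ∫ w in (0:ℝ)..z, q w) z₀ := by
      apply ContinuousOn.continuousAt hlip.continuousOn
      exact Icc_mem_nhds (by linarith) (by linarith)
    exact hco.continuousWithinAt
  · have hzero : ∀ z, 0 < z → ¬ IntervalIntegrable q volume 0 z := by
      intro z hz hzint
      rcases le_total z z₀ with h | h
      · exact h0 (hzint.trans (hq z z₀ hz hz₀))
      · refine h0 (hzint.mono_set ?_)
        rw [Set.uIcc_of_le hz₀.le, Set.uIcc_of_le hz.le]
        exact Set.Icc_subset_Icc le_rfl h
    apply ContinuousWithinAt.congr (continuousWithinAt_const (b := (0:ℝ)))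
    · intro z hz
      exact intervalIntegral.integral_undef (hzero z hz)
    · exact intervalIntegral.integral_undef (hzero z₀ hz₀)




lemma meas_le_bound (κ : Measure ℝ) [IsFiniteMeasure κ] {t : ℝ} (ht : 0 < t) :
    κ {w : ℝ | t ≤ (κ (Set.Iio w)).toReal} ≤ κ Set.univ - ENNReal.ofReal t := by
  set H : ℝ → ℝ := fun w => (κ (Set.Iio w)).toReal with hHdef
  have hmono : Monotone H := fun a b hab =>
    ENNReal.toReal_mono (measure_ne_top κ _) (measure_mono (Iio_subset_Iio hab))
  have hle : ∀ w, t ≤ H w → ENNReal.ofReal t ≤ κ (Set.Iio w) := by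
    intro w hw
    rw [← ENNReal.ofReal_toReal (measure_ne_top κ (Set.Iio w))]
    exact ENNReal.ofReal_le_ofReal hw
  have key : ∀ w, t ≤ H w → κ (Set.Ici w) ≤ κ Set.univ - ENNReal.ofReal t := by
    intro w hw
    have h1 : κ (Set.Iio w) + κ (Set.Ici w) = κ Set.univ := by
      rw [← measure_union (Iio_disjoint_Ici le_rfl) measurableSet_Ici, Iio_union_Ici]
    have h2 : κ (Set.Ici w) + ENNReal.ofReal t ≤ κ Set.univ := by
      calc κ (Set.Ici w) + ENNReal.ofReal t ≤ κ (Set.Ici w) + κ (Set.Iio w) :=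
            add_le_add_right (hle w hw) _
        _ = κ Set.univ := by rw [add_comm, h1]
    exact ENNReal.le_sub_of_add_le_right ENNReal.ofReal_ne_top h2
  set Sset := {w : ℝ | t ≤ H w} with hSdef
  rcases Set.eq_empty_or_nonempty Sset with h | hne
  · rw [h]; simp
  have hup : ∀ ⦃u v : ℝ⦄, u ∈ Sset → u ≤ v → v ∈ Sset := fun u v hu huv =>
    le_trans hu (hmono huv)
  have hbdd : BddBelow Sset := by
    by_contra hb
    have hall : ∀ n : ℕ, ENNReal.ofReal t ≤ κ (Set.Iio (-(n:ℝ))) := by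
      intro n
      obtain ⟨s, hs, hsn⟩ := not_bddBelow_iff.1 hb (-(n:ℝ))
      exact le_trans (hle s hs) (measure_mono (Iio_subset_Iio hsn.le))
    have hempty : (⋂ n : ℕ, Set.Iio (-(n:ℝ))) = (∅ : Set ℝ) := by
      ext w
      simp only [Set.mem_iInter, Set.mem_Iio, Set.mem_empty_iff_false, iff_false, not_forall,
        not_lt]
      obtain ⟨n, hn⟩ := exists_nat_ge (-w)
      exact ⟨n, by linarith⟩
    have hdir : Directed (· ⊇ ·) (fun n : ℕ => Set.Iio (-(n:ℝ))) := by
      intro p q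
      refine ⟨max p q, Set.Iio_subset_Iio (neg_le_neg ?_), Set.Iio_subset_Iio (neg_le_neg ?_)⟩
      · exact_mod_cast le_max_left p q
      · exact_mod_cast le_max_right p q
    have hinf := Directed.measure_iInter
      (μ := κ) (s := fun n : ℕ => Set.Iio (-(n:ℝ)))
      (fun n => measurableSet_Iio.nullMeasurableSet) hdir ⟨0, measure_ne_top _ _⟩
    rw [hempty] at hinf
    have hzero : ENNReal.ofReal t ≤ 0 := by
      rw [← measure_empty (μ := κ), hinf]
      exact le_iInf hall
    exact (ENNReal.ofReal_pos.2 ht).not_ge hzero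
  set a := sInf Sset with hadef
  have hIoi : Set.Ioi a ⊆ Sset := by
    intro w hw
    obtain ⟨s, hsS, hsw⟩ := (csInf_lt_iff hbdd hne).1 hw
    exact hup hsS hsw.le
  by_cases ha : a ∈ Sset
  · exact le_trans (measure_mono (fun w hw => csInf_le hbdd hw)) (key a ha)
  · have hS : Sset ⊆ Set.Ioi a := fun w hw =>
      lt_of_le_of_ne (csInf_le hbdd hw) (fun h => ha (by rw [hadef, h]; exact hw))
    have hU : Set.Ioi a = ⋃ n : ℕ, Set.Ici (a + 1/((n:ℝ)+1)) := by
      ext w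
      simp only [Set.mem_Ioi, Set.mem_iUnion, Set.mem_Ici]
      constructor
      · intro hw
        obtain ⟨n, hn⟩ := exists_nat_one_div_lt (sub_pos.2 hw)
        exact ⟨n, by linarith⟩
      · rintro ⟨n, hn⟩
        have : (0:ℝ) < 1/((n:ℝ)+1) := by positivity
        linarith
    have hmot : Monotone (fun n : ℕ => Set.Ici (a + 1/((n:ℝ)+1))) := by
      intro p q hpq
      apply Set.Ici_subset_Ici.2
      have : 1/((q:ℝ)+1) ≤ 1/((p:ℝ)+1) := by
        apply one_div_le_one_div_of_le (by positivity)
        exact_mod_cast add_le_add_left (Nat.cast_le.2 hpq) 1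
      linarith
    have : κ (Set.Ioi a) ≤ κ Set.univ - ENNReal.ofReal t := by
      rw [hU, hmot.directed_le.measure_iUnion]
      apply iSup_le
      intro n
      exact key _ (hIoi (by
        simp only [Set.mem_Ioi]
        have : (0:ℝ) < 1/((n:ℝ)+1) := by positivity
        linarith))
    exact le_trans (measure_mono hS) this

lemma kk_bound (κ : Measure ℝ) [IsFiniteMeasure κ] (j : ℕ) :
    ∫⁻ w, ENNReal.ofReal ((κ (Set.Iio w)).toReal ^ j) ∂κ
      ≤ ENNReal.ofReal ((κ Set.univ).toReal ^ (j+1) / (j+1)) := by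
  rcases Nat.eq_zero_or_pos j with rfl | hj
  · simp only [pow_zero, ENNReal.ofReal_one, lintegral_one, pow_one, Nat.cast_zero, zero_add,
      div_one]
    rw [ENNReal.ofReal_toReal (measure_ne_top _ _)]
  obtain ⟨i, rfl⟩ : ∃ i, j = i + 1 := ⟨j - 1, (Nat.succ_pred_eq_of_pos hj).symm⟩
  set T : ℝ := (κ Set.univ).toReal with hTdef
  have hT0 : 0 ≤ T := ENNReal.toReal_nonneg
  set H : ℝ → ℝ := fun w => (κ (Set.Iio w)).toReal with hHdef
  have hmono : Monotone H := fun a b hab =>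
    ENNReal.toReal_mono (measure_ne_top κ _) (measure_mono (Iio_subset_Iio hab))
  have hHnn : ∀ w, 0 ≤ H w := fun _ => ENNReal.toReal_nonneg
  have hHle : ∀ w, H w ≤ T :=
    fun w => ENNReal.toReal_mono (measure_ne_top _ _) (measure_mono (Set.subset_univ _))
  set g : ℝ → ℝ := fun t => ((i:ℝ)+1) * t ^ i with hgdef
  have hgcont : Continuous g := continuous_const.mul (continuous_pow i)
  have layer := lintegral_comp_eq_lintegral_meas_le_mul κ (f := H) (g := g)
    (Eventually.of_forall hHnn) hmono.measurable.aemeasurable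
    (fun t _ => hgcont.intervalIntegrable 0 t)
    ((ae_restrict_iff' measurableSet_Ioi).2 (ae_of_all _ (fun t ht => by
      have : (0:ℝ) < t := ht
      positivity)))
  have hcomp : ∀ w, (∫ t in (0:ℝ)..(H w), g t) = H w ^ (i+1) := by
    intro w
    rw [hgdef]
    simp only
    rw [intervalIntegral.integral_const_mul, integral_pow]
    have : ((i:ℝ) + 1) ≠ 0 := by positivity
    field_simp
    simp
  have hLHS : ∫⁻ w, ENNReal.ofReal (H w ^ (i+1)) ∂κ
      = ∫⁻ t in Set.Ioi (0:ℝ), κ {a : ℝ | t ≤ H a} * ENNReal.ofReal (g t) := by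
    rw [← layer]
    congr 1
    ext w
    rw [hcomp w]
  -- split the t-integral
  have hsplit : (Set.Ioi (0:ℝ)) = Set.Ioc 0 T ∪ Set.Ioi T := (Set.Ioc_union_Ioi_eq_Ioi hT0).symm
  have htail : ∫⁻ t in Set.Ioi T, κ {a : ℝ | t ≤ H a} * ENNReal.ofReal (g t) = 0 := by
    rw [setLIntegral_congr_fun measurableSet_Ioi (fun t ht => ?_), lintegral_zero]
    have : {a : ℝ | t ≤ H a} = ∅ := by
      ext w
      simp only [Set.mem_setOf_eq, Set.mem_empty_iff_false, iff_false, not_le]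
      exact lt_of_le_of_lt (hHle w) ht
    rw [this, measure_empty, zero_mul]
  have hmain : ∫⁻ t in Set.Ioc (0:ℝ) T, κ {a : ℝ | t ≤ H a} * ENNReal.ofReal (g t)
      ≤ ENNReal.ofReal (T ^ (i+2) / (i+2)) := by
    have hb : ∀ t ∈ Set.Ioc (0:ℝ) T, κ {a : ℝ | t ≤ H a} * ENNReal.ofReal (g t)
        ≤ ENNReal.ofReal ((T - t) * g t) := by
      intro t ht
      have h1 : κ {a : ℝ | t ≤ H a} ≤ ENNReal.ofReal (T - t) := by
        rw [ENNReal.ofReal_sub _ ht.1.le, hTdef, ENNReal.ofReal_toReal (measure_ne_top _ _)]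
        exact meas_le_bound κ ht.1
      calc κ {a : ℝ | t ≤ H a} * ENNReal.ofReal (g t)
          ≤ ENNReal.ofReal (T - t) * ENNReal.ofReal (g t) := mul_le_mul_left h1 _
        _ = ENNReal.ofReal ((T - t) * g t) := (ENNReal.ofReal_mul (by linarith [ht.2])).symm
    calc ∫⁻ t in Set.Ioc (0:ℝ) T, κ {a : ℝ | t ≤ H a} * ENNReal.ofReal (g t)
        ≤ ∫⁻ t in Set.Ioc (0:ℝ) T, ENNReal.ofReal ((T - t) * g t) :=
          setLIntegral_mono ((continuous_const.sub continuous_id).mul hgcont).measurable.ennreal_ofReal hb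
      _ = ENNReal.ofReal (∫ t in Set.Ioc (0:ℝ) T, (T - t) * g t) := by
          have hIntc : IntegrableOn (fun t : ℝ => (T - t) * g t) (Set.Ioc 0 T) volume :=
            Continuous.integrableOn_Ioc (by fun_prop)
          rw [← ofReal_integral_eq_lintegral_ofReal hIntc
            ((ae_restrict_iff' measurableSet_Ioc).2 (ae_of_all _ (fun t ht => by
              have h1 : 0 ≤ T - t := by linarith [ht.2]
              have h2 : (0:ℝ) ≤ g t := by
                have : (0:ℝ) < t := ht.1
                simp only [hgdef]
                positivity
              exact mul_nonneg h1 h2)))]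
      _ = ENNReal.ofReal (T ^ (i+2) / (i+2)) := by
          congr 1
          rw [← intervalIntegral.integral_of_le hT0]
          have hexp : ∀ t : ℝ, (T - t) * g t = ((i:ℝ)+1) * T * t ^ i - ((i:ℝ)+1) * t ^ (i+1) := by
            intro t
            simp only [hgdef]
            ring
          rw [intervalIntegral.integral_congr (fun t _ => hexp t)]
          rw [intervalIntegral.integral_sub (f := fun t => ((i:ℝ)+1) * T * t ^ i)
            (g := fun t => ((i:ℝ)+1) * t ^ (i+1))
            ((continuous_const.mul (continuous_pow i)).intervalIntegrable _ _)
            ((continuous_const.mul (continuous_pow (i+1))).intervalIntegrable _ _)]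
          rw [intervalIntegral.integral_const_mul, intervalIntegral.integral_const_mul,
            integral_pow, integral_pow]
          have h1 : ((i:ℝ) + 1) ≠ 0 := by positivity
          have h2 : ((i:ℝ) + 2) ≠ 0 := by positivity
          have hc1 : ((i:ℕ) + 1 + 1 : ℝ) = (i:ℝ) + 2 := by push_cast; ring
          field_simp
          push_cast
          ring
  calc ∫⁻ w, ENNReal.ofReal (H w ^ (i+1)) ∂κ
      = ∫⁻ t in Set.Ioi (0:ℝ), κ {a : ℝ | t ≤ H a} * ENNReal.ofReal (g t) := hLHS
    _ = (∫⁻ t in Set.Ioc (0:ℝ) T, κ {a : ℝ | t ≤ H a} * ENNReal.ofReal (g t))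
        + ∫⁻ t in Set.Ioi T, κ {a : ℝ | t ≤ H a} * ENNReal.ofReal (g t) := by
        rw [hsplit, lintegral_union measurableSet_Ioi Set.Ioc_disjoint_Ioi_same]
    _ ≤ ENNReal.ofReal (T ^ (i+2) / (i+2)) + 0 := by
        rw [htail]; exact add_le_add_left hmain _
    _ = ENNReal.ofReal ((κ Set.univ).toReal ^ ((i+1)+1) / (((i+1):ℕ)+1)) := by
        rw [add_zero, hTdef]
        congr 1
        push_cast
        ring


namespace MString

variable (S : MString)

lemma mu_Ioc_lt_top {a b : ℝ} (ha : 0 < a) : S.μ (Set.Ioc a b) < ⊤ := by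
  rcases le_total a b with h | h
  · rw [S.stieltjes a b ha h]; exact ENNReal.ofReal_lt_top
  · rw [Set.Ioc_eq_empty (by exact fun hc => absurd h (not_le.2 hc)), measure_empty]
    exact ENNReal.zero_lt_top

lemma integrableOn_Ioc_of_contOn {g : ℝ → ℝ} {a b : ℝ} (ha : 0 < a)
    (hg : ContinuousOn g (Set.Ioi 0)) : IntegrableOn g (Set.Ioc a b) S.μ := by
  rcases le_total b a with h | h
  · rw [Set.Ioc_eq_empty (not_lt.2 h)]; exact integrableOn_empty
  have hsub : Set.Icc a b ⊆ Set.Ioi 0 := fun z hz => lt_of_lt_of_le ha hz.1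
  obtain ⟨C, hC⟩ := IsCompact.exists_bound_of_continuousOn isCompact_Icc (hg.mono hsub)
  haveI : IsFiniteMeasure (S.μ.restrict (Set.Ioc a b)) := by
    constructor
    rw [Measure.restrict_apply_univ]
    exact S.mu_Ioc_lt_top ha
  apply Integrable.mono' (integrable_const C)
  · exact (hg.mono (fun z hz => ha.trans hz.1 : Set.Ioc a b ⊆ Set.Ioi 0)).aestronglyMeasurable
      measurableSet_Ioc
  · exact (ae_restrict_iff' measurableSet_Ioc).2 (ae_of_all _ fun z hz =>
      hC z (Set.Ioc_subset_Icc_self hz))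

lemma jInt_diff {g : ℝ → ℝ} (hg : ContinuousOn g (Set.Ioi 0)) {w b : ℝ} (hw : 0 < w)
    (hwb : w ≤ b) : jInt S g w = jInt S g b + ∫ z in Set.Ioc w b, g z ∂S.μ := by
  have hint : ∀ u v : ℝ, 0 < u → IntegrableOn g (Set.Ioc u v) S.μ :=
    fun u v hu => S.integrableOn_Ioc_of_contOn hu hg
  have hunion : ∀ u v r : ℝ, 0 < u → u ≤ v → v ≤ r →
      ∫ z in Set.Ioc u r, g z ∂S.μ =
        (∫ z in Set.Ioc u v, g z ∂S.μ) + ∫ z in Set.Ioc v r, g z ∂S.μ := by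
    intro u v r hu huv hvr
    rw [← Set.Ioc_union_Ioc_eq_Ioc huv hvr]
    exact setIntegral_union (Set.Ioc_disjoint_Ioc_of_le le_rfl) measurableSet_Ioc
      (hint u v hu) (hint v r (lt_of_lt_of_le hu huv))
  unfold jInt
  rcases le_or_gt b 1 with hb | hb
  · have hw1 : w ≤ 1 := hwb.trans hb
    rw [if_pos hw1, if_pos hb, hunion w b 1 hw hwb hb]
    ring
  · rcases le_or_gt w 1 with hw1 | hw1
    · rw [if_pos hw1, if_neg (not_le.2 hb)]
      have := hunion w 1 b hw hw1 hb.le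
      rw [this]
      ring
    · rw [if_neg (not_le.2 hw1), if_neg (not_le.2 hb)]
      have := hunion 1 w b one_pos hw1.le hwb
      rw [this]
      ring

lemma jInt_bound {g : ℝ → ℝ} (hg : ContinuousOn g (Set.Ioi 0)) {a b : ℝ} (ha : 0 < a)
    (hab : a ≤ b) : ∃ C, ∀ w ∈ Set.Icc a b, |jInt S g w| ≤ C := by
  set A := min a 1 with hA
  set B := max b 1 with hB
  have hA0 : 0 < A := lt_min ha one_pos
  refine ⟨∫ z in Set.Ioc A B, |g z| ∂S.μ, fun w hw => ?_⟩
  have hgint : IntegrableOn g (Set.Ioc A B) S.μ := S.integrableOn_Ioc_of_contOn hA0 hg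
  have key : ∀ u v : ℝ, Set.Ioc u v ⊆ Set.Ioc A B →
      |∫ z in Set.Ioc u v, g z ∂S.μ| ≤ ∫ z in Set.Ioc A B, |g z| ∂S.μ := by
    intro u v hsub
    calc |∫ z in Set.Ioc u v, g z ∂S.μ| ≤ ∫ z in Set.Ioc u v, |g z| ∂S.μ := by
          simpa [Real.norm_eq_abs] using
            norm_integral_le_integral_norm (μ := S.μ.restrict (Set.Ioc u v)) g
      _ ≤ ∫ z in Set.Ioc A B, |g z| ∂S.μ := by
          apply setIntegral_mono_set hgint.abs
          · exact ae_of_all _ fun z => abs_nonneg _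
          · exact HasSubset.Subset.eventuallyLE hsub
  unfold jInt
  rcases le_or_gt w 1 with hw1 | hw1
  · rw [if_pos hw1]
    exact key w 1 (fun z hz => ⟨lt_of_le_of_lt (min_le_left a 1|>.trans hw.1) hz.1 |>.trans_le le_rfl,
      hz.2.trans (le_max_right b 1)⟩)
  · rw [if_neg (not_le.2 hw1), abs_neg]
    exact key 1 w (fun z hz => ⟨lt_of_le_of_lt (min_le_right a 1) hz.1,
      hz.2.trans (hw.2.trans (le_max_left b 1))⟩)

lemma jInt_intervalIntegrable {g : ℝ → ℝ} (hg : ContinuousOn g (Set.Ioi 0)) {a b : ℝ}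
    (ha : 0 < a) (hab : a ≤ b) : IntervalIntegrable (jInt S g) volume a b := by
  have hint : ∀ u v : ℝ, 0 < u → IntegrableOn g (Set.Ioc u v) S.μ :=
    fun u v hu => S.integrableOn_Ioc_of_contOn hu hg
  -- positive and negative parts of the tail integral, made globally antitone
  set p : ℝ → ℝ := fun w => ∫ z in Set.Ioc (max w a) b, max (g z) 0 ∂S.μ with hp
  set p' : ℝ → ℝ := fun w => ∫ z in Set.Ioc (max w a) b, max (-g z) 0 ∂S.μ with hp'
  have hpos : IntegrableOn (fun z => max (g z) 0) (Set.Ioc a b) S.μ := (hint a b ha).pos_part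
  have hneg : IntegrableOn (fun z => max (-g z) 0) (Set.Ioc a b) S.μ := (hint a b ha).neg.pos_part
  have hmono : ∀ (h : ℝ → ℝ), IntegrableOn h (Set.Ioc a b) S.μ → (∀ z, 0 ≤ h z) →
      Antitone (fun w => ∫ z in Set.Ioc (max w a) b, h z ∂S.μ) := by
    intro h hh hh0 u v huv
    apply setIntegral_mono_set (hh.mono_set (Set.Ioc_subset_Ioc (le_max_right u a) le_rfl))
      (ae_of_all _ fun z => hh0 z)
    exact HasSubset.Subset.eventuallyLE (Set.Ioc_subset_Ioc (max_le_max huv le_rfl) le_rfl)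
  have hpm : Antitone p := hmono _ hpos (fun z => le_max_right _ _)
  have hpm' : Antitone p' := hmono _ hneg (fun z => le_max_right _ _)
  set ψ : ℝ → ℝ := fun w => jInt S g b + (p w - p' w) with hψ
  have hψm : Measurable ψ :=
    (measurable_const.add (hpm.measurable.sub hpm'.measurable))
  have heq : ∀ w ∈ Set.Icc a b, jInt S g w = ψ w := by
    intro w hw
    have hw0 : 0 < w := lt_of_lt_of_le ha hw.1
    rw [S.jInt_diff hg hw0 hw.2, hψ]
    simp only
    congr 1
    have hmax : max w a = w := max_eq_left hw.1
    have hsplit : ∀ z, g z = max (g z) 0 - max (-g z) 0 := by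
      intro z
      rcases le_total (g z) 0 with h | h
      · rw [max_eq_right h, max_eq_left (by linarith)]; ring
      · rw [max_eq_left h, max_eq_right (by linarith)]; ring
    calc ∫ z in Set.Ioc w b, g z ∂S.μ
        = ∫ z in Set.Ioc w b, (max (g z) 0 - max (-g z) 0) ∂S.μ := by
          exact setIntegral_congr_fun measurableSet_Ioc (fun z _ => hsplit z)
      _ = (∫ z in Set.Ioc w b, max (g z) 0 ∂S.μ) - ∫ z in Set.Ioc w b, max (-g z) 0 ∂S.μ := by
          apply integral_sub
          · exact hpos.mono_set (Set.Ioc_subset_Ioc hw.1 le_rfl)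
          · exact hneg.mono_set (Set.Ioc_subset_Ioc hw.1 le_rfl)
      _ = p w - p' w := by rw [hp, hp']; simp only [hmax]
  obtain ⟨C, hC⟩ := S.jInt_bound hg ha hab
  rw [intervalIntegrable_iff_integrableOn_Ioc_of_le hab]
  have haesm : AEStronglyMeasurable (jInt S g) (volume.restrict (Set.Ioc a b)) := by
    apply hψm.aestronglyMeasurable.congr
    exact (ae_restrict_iff' measurableSet_Ioc).2 (ae_of_all _ fun z hz =>
      (heq z (Set.Ioc_subset_Icc_self hz)).symm)
  apply Integrable.mono' (integrable_const C) haesm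
  exact (ae_restrict_iff' measurableSet_Ioc).2 (ae_of_all _ fun z hz =>
    hC z (Set.Ioc_subset_Icc_self hz))

end MString

namespace MString

lemma contG (S : MString) : ∀ k : ℕ, ContinuousOn (G S k) (Set.Ioi 0) := by
  intro k
  induction k using Nat.strong_induction_on with
  | _ k IH =>
    match k with
    | 0 => exact continuousOn_const
    | 1 =>
      have hmt : ∀ a b : ℝ, 0 < a → MonotoneOn (mtilde S) (Set.Icc a b) := by
        intro a b ha u hu v hv huv
        exact sub_le_sub_right
          ((S.strict_mono.monotoneOn) (lt_of_lt_of_le ha hu.1) (lt_of_lt_of_le ha hv.1) huv) _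
      show ContinuousOn (fun x => ∫ y in (0:ℝ)..x, mtilde S y) (Set.Ioi 0)
      apply prim_cont
      · intro a b ha hb
        apply MonotoneOn.intervalIntegrable
        intro u hu v hv huv
        have hm : (0:ℝ) < min a b := lt_min ha hb
        have hu' : u ∈ Set.Icc (min a b) (max a b) := hu
        have hv' : v ∈ Set.Icc (min a b) (max a b) := hv
        exact hmt (min a b) (max a b) hm hu' hv' huv
      · intro a b ha hab
        refine ⟨max |mtilde S a| |mtilde S b|, fun w hw => ?_⟩
        have h1 := hmt a b ha ⟨le_rfl, hab⟩ hw hw.1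
        have h2 := hmt a b ha hw ⟨hab, le_rfl⟩ hw.2
        rw [abs_le]
        constructor
        · calc -(max |mtilde S a| |mtilde S b|) ≤ -|mtilde S a| := by
                simp only [neg_le_neg_iff]; exact le_max_left _ _
            _ ≤ mtilde S a := neg_abs_le _
            _ ≤ mtilde S w := h1
        · exact h2.trans ((le_abs_self _).trans (le_max_right _ _))
    | (n+2) =>
      have hgc : ContinuousOn (G S (n+1)) (Set.Ioi 0) := IH (n+1) (by omega)
      show ContinuousOn (fun x => -∫ y in (0:ℝ)..x, jInt S (G S (n+1)) y) (Set.Ioi 0)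
      apply ContinuousOn.neg
      apply prim_cont
      · intro a b ha hb
        rcases le_total a b with h | h
        · exact S.jInt_intervalIntegrable hgc ha h
        · exact (S.jInt_intervalIntegrable hgc hb h).symm
      · intro a b ha hab
        exact S.jInt_bound hgc ha hab

end MString

namespace MString

noncomputable def Lb (S : MString) (y : ℝ) : ℝ≥0∞ :=
  ∫⁻ t in Set.Ioc (0:ℝ) y, ENNReal.ofReal t ∂S.μ

lemma Lb_lt_top (S : MString) (y : ℝ) : Lb S y < ⊤ := by
  rcases le_total y 1 with h | h
  · exact lt_of_le_of_lt (lintegral_mono_set (Set.Ioc_subset_Ioc le_rfl h)) S.int_fin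
  · have hsplit : Set.Ioc (0:ℝ) y = Set.Ioc 0 1 ∪ Set.Ioc 1 y :=
      (Set.Ioc_union_Ioc_eq_Ioc zero_le_one h).symm
    have h2 : (∫⁻ t in Set.Ioc (1:ℝ) y, ENNReal.ofReal t ∂S.μ) < ⊤ := by
      calc (∫⁻ t in Set.Ioc (1:ℝ) y, ENNReal.ofReal t ∂S.μ)
          ≤ ∫⁻ _ in Set.Ioc (1:ℝ) y, ENNReal.ofReal y ∂S.μ :=
            setLIntegral_mono measurable_const
              (fun t ht => ENNReal.ofReal_le_ofReal ht.2)
        _ = ENNReal.ofReal y * S.μ (Set.Ioc 1 y) := setLIntegral_const _ _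
        _ < ⊤ := ENNReal.mul_lt_top ENNReal.ofReal_lt_top (S.mu_Ioc_lt_top one_pos)
    rw [Lb, hsplit, lintegral_union measurableSet_Ioc (Set.Ioc_disjoint_Ioc_of_le le_rfl)]
    exact ENNReal.add_lt_top.2 ⟨S.int_fin, h2⟩

lemma F_eq_Lb (S : MString) (y : ℝ) (hy : 0 ≤ y) : F S y = (Lb S y).toReal := by
  rw [F, Lb]
  rw [integral_eq_lintegral_of_nonneg_ae]
  · exact (ae_restrict_iff' measurableSet_Ioc).2 (ae_of_all _ fun t ht => ht.1.le)
  · exact aestronglyMeasurable_id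

lemma F_nonneg_s3 (S : MString) (y : ℝ) (hy : 0 ≤ y) : 0 ≤ F S y := by
  rw [F_eq_Lb S y hy]; exact ENNReal.toReal_nonneg

lemma F_mono (S : MString) {y z : ℝ} (hy : 0 ≤ y) (hyz : y ≤ z) : F S y ≤ F S z := by
  rw [F_eq_Lb S y hy, F_eq_Lb S z (hy.trans hyz)]
  exact ENNReal.toReal_mono (Lb_lt_top S z).ne
    (lintegral_mono_set (Set.Ioc_subset_Ioc le_rfl hyz))

lemma main_bound (S : MString) (f : ℝ → ℝ) {x C : ℝ} (hx : 0 ≤ x) (hC : 0 ≤ C)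
    (hbase : ∀ y ∈ Set.Icc (0:ℝ) x, |mBul S f y| ≤ C) :
    ∀ j : ℕ, ∀ y ∈ Set.Icc (0:ℝ) x,
      |msIter S j (mBul S f) y| ≤ C * F S y ^ j / (j.factorial : ℝ) := by
  intro j
  induction j with
  | zero =>
    intro y hy
    simpa [msIter] using hbase y hy
  | succ j IH =>
    intro y hy
    have hy0 : 0 ≤ y := hy.1
    set κ : Measure ℝ := (S.μ.restrict (Set.Ioc 0 y)).withDensity (fun t => ENNReal.ofReal t)
      with hκdef
    have hκuniv : κ Set.univ = Lb S y := by
      rw [hκdef, withDensity_apply _ MeasurableSet.univ, setLIntegral_univ]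
      rfl
    haveI : IsFiniteMeasure κ := ⟨by rw [hκuniv]; exact Lb_lt_top S y⟩
    set N : ℝ → ℝ := fun w => (κ (Set.Iio w)).toReal with hNdef
    have hNmono : Monotone N := fun a b hab =>
      ENNReal.toReal_mono (measure_ne_top κ _) (measure_mono (Set.Iio_subset_Iio hab))
    have hNnn : ∀ w, 0 ≤ N w := fun _ => ENNReal.toReal_nonneg
    have hFN : ∀ z w : ℝ, 0 < z → z < w → w ≤ y → F S z ≤ N w := by
      intro z w hz hzw hwy
      rw [F_eq_Lb S z hz.le, hNdef]
      apply ENNReal.toReal_mono (measure_ne_top κ _)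
      rw [hκdef, withDensity_apply _ measurableSet_Iio,
        Measure.restrict_restrict measurableSet_Iio]
      have hsub : Set.Ioc (0:ℝ) z ⊆ Set.Iio w ∩ Set.Ioc 0 y := fun t ht =>
        ⟨lt_of_le_of_lt ht.2 hzw, ht.1, ht.2.trans (hzw.le.trans hwy)⟩
      exact lintegral_mono_set hsub
    have hCj : 0 ≤ C / (j.factorial : ℝ) := div_nonneg hC (Nat.cast_nonneg _)
    -- pointwise bound on the inner interval integral
    have hinner : ∀ w ∈ Set.Ioc (0:ℝ) y,
        ‖sBul (msIter S j (mBul S f)) w‖ ≤ C * N w ^ j / (j.factorial : ℝ) * w := by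
      intro w hw
      have hw0 : 0 < w := hw.1
      have hae : ∀ᵐ z : ℝ, z ≠ w := by
        rw [ae_iff]
        simpa using Real.volume_singleton (a := w)
      have hbd : ∀ᵐ z : ℝ, z ∈ Set.uIoc 0 w → ‖msIter S j (mBul S f) z‖ ≤
          C * N w ^ j / (j.factorial : ℝ) := by
        filter_upwards [hae] with z hzw hzu
        rw [Set.uIoc_of_le hw0.le] at hzu
        have hz0 : 0 < z := hzu.1
        have hzltw : z < w := lt_of_le_of_ne hzu.2 hzw
        have hzx : z ∈ Set.Icc (0:ℝ) x := ⟨hz0.le, (hzltw.le.trans hw.2).trans hy.2⟩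
        have h1 := IH z hzx
        rw [Real.norm_eq_abs]
        calc |msIter S j (mBul S f) z| ≤ C * F S z ^ j / (j.factorial : ℝ) := h1
          _ ≤ C * N w ^ j / (j.factorial : ℝ) := by
              gcongr
              · exact F_nonneg_s3 S z hz0.le
              · exact hFN z w hz0 hzltw hw.2
      have := intervalIntegral.norm_integral_le_of_norm_le_const_ae hbd
      rw [sub_zero, abs_of_nonneg hw0.le] at this
      exact this
    have hmeasg : Measurable fun w => ENNReal.ofReal (N w ^ j) :=
      ((hNmono.measurable).pow_const j).ennreal_ofReal
    have hFy : 0 ≤ F S y := F_nonneg_s3 S y hy0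
    have heq : msIter S (j+1) (mBul S f) y
        = ∫ z in Set.Ioc (0:ℝ) y, sBul (msIter S j (mBul S f)) z ∂S.μ := rfl
    have step1 : |msIter S (j+1) (mBul S f) y|
        ≤ (∫⁻ w in Set.Ioc (0:ℝ) y,
            ENNReal.ofReal ‖sBul (msIter S j (mBul S f)) w‖ ∂S.μ).toReal := by
      rw [heq, ← Real.norm_eq_abs]
      exact norm_integral_le_lintegral_norm _
    have hT : (κ Set.univ).toReal = F S y := by rw [hκuniv, F_eq_Lb S y hy0]
    have hchain : (∫⁻ w in Set.Ioc (0:ℝ) y,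
          ENNReal.ofReal ‖sBul (msIter S j (mBul S f)) w‖ ∂S.μ)
        ≤ ENNReal.ofReal (C / (j.factorial : ℝ))
            * ENNReal.ofReal (F S y ^ (j+1) / (j+1)) := by
      calc (∫⁻ w in Set.Ioc (0:ℝ) y,
            ENNReal.ofReal ‖sBul (msIter S j (mBul S f)) w‖ ∂S.μ)
          ≤ ∫⁻ w in Set.Ioc (0:ℝ) y,
              ENNReal.ofReal (C / (j.factorial : ℝ))
                * (ENNReal.ofReal w * ENNReal.ofReal (N w ^ j)) ∂S.μ := by
            apply setLIntegral_mono
              (measurable_const.mul ((measurable_id.ennreal_ofReal).mul hmeasg))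
            intro w hw
            calc ENNReal.ofReal ‖sBul (msIter S j (mBul S f)) w‖
                ≤ ENNReal.ofReal (C * N w ^ j / (j.factorial : ℝ) * w) :=
                  ENNReal.ofReal_le_ofReal (hinner w hw)
              _ = ENNReal.ofReal (C / (j.factorial : ℝ))
                    * (ENNReal.ofReal w * ENNReal.ofReal (N w ^ j)) := by
                  rw [← ENNReal.ofReal_mul hw.1.le, ← ENNReal.ofReal_mul hCj]
                  congr 1
                  ring
        _ = ENNReal.ofReal (C / (j.factorial : ℝ))
              * ∫⁻ w in Set.Ioc (0:ℝ) y,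
                  ENNReal.ofReal w * ENNReal.ofReal (N w ^ j) ∂S.μ :=
            lintegral_const_mul _ ((measurable_id.ennreal_ofReal).mul hmeasg)
        _ = ENNReal.ofReal (C / (j.factorial : ℝ)) * ∫⁻ w, ENNReal.ofReal (N w ^ j) ∂κ := by
            congr 1
            rw [hκdef, lintegral_withDensity_eq_lintegral_mul _
              (by exact measurable_id.ennreal_ofReal) hmeasg]
            rfl
        _ ≤ ENNReal.ofReal (C / (j.factorial : ℝ))
              * ENNReal.ofReal (F S y ^ (j+1) / (j+1)) := by
            apply mul_le_mul_right
            have := kk_bound κ j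
            rwa [hT] at this
    have hfin : ENNReal.ofReal (C / (j.factorial : ℝ))
        * ENNReal.ofReal (F S y ^ (j+1) / (j+1)) ≠ ⊤ :=
      ENNReal.mul_ne_top ENNReal.ofReal_ne_top ENNReal.ofReal_ne_top
    calc |msIter S (j+1) (mBul S f) y|
        ≤ (∫⁻ w in Set.Ioc (0:ℝ) y,
            ENNReal.ofReal ‖sBul (msIter S j (mBul S f)) w‖ ∂S.μ).toReal := step1
      _ ≤ (ENNReal.ofReal (C / (j.factorial : ℝ))
            * ENNReal.ofReal (F S y ^ (j+1) / (j+1))).toReal :=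
          ENNReal.toReal_mono hfin hchain
      _ = C * F S y ^ (j+1) / ((j+1).factorial : ℝ) := by
          rw [← ENNReal.ofReal_mul hCj, ENNReal.toReal_ofReal
            (mul_nonneg hCj (div_nonneg (pow_nonneg hFy _) (by positivity)))]
          rw [Nat.factorial_succ]
          have h1 : ((j.factorial : ℝ)) ≠ 0 := Nat.cast_ne_zero.2 (Nat.factorial_ne_zero j)
          have h2 : ((j:ℝ) + 1) ≠ 0 := by positivity
          push_cast
          field_simp

end MString

namespace MString

lemma mBul_smIter (S : MString) (f : ℝ → ℝ) : ∀ j : ℕ,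
    mBul S (smIter S j f) = msIter S j (mBul S f) := by
  intro j
  induction j with
  | zero => rfl
  | succ j IH =>
    have h1 : smIter S (j+1) f = sBul (mBul S (smIter S j f)) := rfl
    rw [h1, IH]
    rfl

lemma smIter_bound (S : MString) (f : ℝ → ℝ) {x C : ℝ} (hx : 0 ≤ x) (hC : 0 ≤ C)
    (hbase : ∀ y ∈ Set.Icc (0:ℝ) x, |mBul S f y| ≤ C) (j : ℕ) :
    |smIter S (j+1) f x| ≤ x * (C * F S x ^ j / (j.factorial : ℝ)) := by
  have heq : smIter S (j+1) f x = ∫ z in (0:ℝ)..x, msIter S j (mBul S f) z := by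
    show sBul (mBul S (smIter S j f)) x = _
    rw [mBul_smIter]
    rfl
  rw [heq]
  have h := intervalIntegral.norm_integral_le_of_norm_le_const
    (C := C * F S x ^ j / (j.factorial : ℝ))
    (f := fun z => msIter S j (mBul S f) z) (a := 0) (b := x) ?_
  · rw [sub_zero, abs_of_nonneg hx, Real.norm_eq_abs] at h
    calc |∫ z in (0:ℝ)..x, msIter S j (mBul S f) z|
        ≤ C * F S x ^ j / (j.factorial : ℝ) * x := h
      _ = x * (C * F S x ^ j / (j.factorial : ℝ)) := mul_comm _ _
  · intro z hz
    rw [Set.uIoc_of_le hx] at hz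
    have h1 := main_bound S f hx hC hbase j z ⟨hz.1.le, hz.2⟩
    rw [Real.norm_eq_abs]
    refine h1.trans ?_
    gcongr
    · exact F_nonneg_s3 S z hz.1.le
    · exact F_mono S hz.1.le hz.2

lemma exists_base (S : MString) (d : ℕ) {x : ℝ} (hx : 0 ≤ x) :
    0 ≤ Sd S d x ∧ ∀ y ∈ Set.Icc (0:ℝ) x, |mBul S (G S d) y| ≤ Sd S d x := by
  have hzero : mBul S (G S d) 0 = 0 := by
    rw [mBul, Set.Ioc_self, Measure.restrict_empty, integral_zero_measure]
  by_cases hInt : IntegrableOn (G S d) (Set.Ioc 0 x) S.μ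
  · have hbdd : BddAbove ((fun y => |mBul S (G S d) y|) '' Set.Icc 0 x) := by
      refine ⟨∫ z in Set.Ioc (0:ℝ) x, |G S d z| ∂S.μ, ?_⟩
      rintro v ⟨y, hy, rfl⟩
      calc |mBul S (G S d) y| ≤ ∫ z in Set.Ioc (0:ℝ) y, |G S d z| ∂S.μ := by
            simpa [Real.norm_eq_abs, mBul] using
              norm_integral_le_integral_norm (μ := S.μ.restrict (Set.Ioc 0 y)) (G S d)
        _ ≤ ∫ z in Set.Ioc (0:ℝ) x, |G S d z| ∂S.μ :=
            setIntegral_mono_set hInt.abs (ae_of_all _ fun z => abs_nonneg _)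
              (HasSubset.Subset.eventuallyLE (Set.Ioc_subset_Ioc le_rfl hy.2))
    constructor
    · have h0 := le_csSup hbdd ⟨(0:ℝ), ⟨le_rfl, hx⟩, rfl⟩
      simp only [hzero, abs_zero] at h0
      exact h0
    · intro y hy
      exact le_csSup hbdd ⟨y, hy, rfl⟩
  · have hnone : ∀ y ∈ Set.Icc (0:ℝ) x, mBul S (G S d) y = 0 := by
      intro y hy
      rcases eq_or_lt_of_le hy.1 with h0 | h0
      · rw [← h0]; exact hzero
      · apply integral_undef
        intro hcon
        apply hInt
        have hun : Set.Ioc (0:ℝ) x = Set.Ioc 0 y ∪ Set.Ioc y x :=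
          (Set.Ioc_union_Ioc_eq_Ioc hy.1 hy.2).symm
        rw [hun]
        exact IntegrableOn.union hcon (S.integrableOn_Ioc_of_contOn h0 (contG S d))
    have himg : ((fun y => |mBul S (G S d) y|) '' Set.Icc 0 x) = {0} := by
      apply Set.Subset.antisymm
      · rintro v ⟨y, hy, rfl⟩
        simp [hnone y hy]
      · rintro v rfl
        exact ⟨0, ⟨le_rfl, hx⟩, by simp [hzero]⟩
    have hSd : Sd S d x = 0 := by rw [Sd, himg, csSup_singleton]
    rw [hSd]
    exact ⟨le_rfl, fun y hy => by simp [hnone y hy]⟩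

end MString

theorem stmt3 (S : MString) (hfin : MString.dIdx S < ⊤) (d : ℕ) (hd1 : 1 ≤ d)
    (hdm : MString.dIdx S ≤ (d : ℕ∞)) (k : ℕ) (hk : 1 ≤ k) (x lam : ℝ) (hx : 0 ≤ x)
    (hlam : 0 < lam) :
    |MString.smIter S k (MString.G S d) x| ≤ x * MString.Sd S d x * MString.E S (k - 1) 0 x ∧
    |MString.msIter S (k - 1) (MString.mBul S (MString.G S d)) x|
      ≤ MString.Sd S d x * MString.E S (k - 1) 0 x ∧
    |MString.phi S d lam x - 1 - ∑ i ∈ Finset.Icc 1 d, lam ^ i * MString.G S i x|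
      ≤ x * lam ^ (d + 1) * MString.Sd S d x * MString.E S 0 lam x := by
  obtain ⟨hC, hbase⟩ := MString.exists_base S d hx
  set C := MString.Sd S d x with hCdef
  obtain ⟨j, rfl⟩ : ∃ j, k = j + 1 := ⟨k - 1, (Nat.succ_pred_eq_of_pos hk).symm⟩
  have hjk : (j + 1) - 1 = j := by omega
  have hEj : MString.E S j 0 x = MString.F S x ^ j / (j.factorial : ℝ) := by
    rw [MString.E, zero_mul, Real.exp_zero]; ring
  refine ⟨?_, ?_, ?_⟩
  · rw [hjk, hEj]
    calc |MString.smIter S (j+1) (MString.G S d) x|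
        ≤ x * (C * MString.F S x ^ j / (j.factorial : ℝ)) :=
          MString.smIter_bound S (MString.G S d) hx hC hbase j
      _ = x * C * (MString.F S x ^ j / (j.factorial : ℝ)) := by ring
  · rw [hjk, hEj]
    calc |MString.msIter S j (MString.mBul S (MString.G S d)) x|
        ≤ C * MString.F S x ^ j / (j.factorial : ℝ) :=
          MString.main_bound S (MString.G S d) hx hC hbase j x ⟨hx, le_rfl⟩
      _ = C * (MString.F S x ^ j / (j.factorial : ℝ)) := by ring
  · have hphi : MString.phi S d lam x - 1 - ∑ i ∈ Finset.Icc 1 d, lam ^ i * MString.G S i x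
        = ∑' n : ℕ, lam ^ (d + n + 1) * MString.smIter S (n + 1) (MString.G S d) x := by
      simp only [MString.phi]
      ring
    set b : ℕ → ℝ := fun n => lam ^ (d + n + 1)
      * (x * (C * MString.F S x ^ n / (n.factorial : ℝ))) with hbdef
    have hab : ∀ n, |lam ^ (d+n+1) * MString.smIter S (n+1) (MString.G S d) x| ≤ b n := by
      intro n
      rw [abs_mul, abs_pow, abs_of_pos hlam]
      exact mul_le_mul_of_nonneg_left (MString.smIter_bound S _ hx hC hbase n) (by positivity)
    have hrew : ∀ n, b n = (lam ^ (d+1) * x * C)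
        * ((lam * MString.F S x) ^ n / (n.factorial : ℝ)) := by
      intro n
      rw [hbdef]
      simp only
      rw [show d + n + 1 = (d+1) + n from by omega, pow_add, mul_pow]
      ring
    have hsumb : Summable b :=
      (((Real.summable_pow_div_factorial (lam * MString.F S x)).mul_left
        (lam ^ (d+1) * x * C))).congr (fun n => (hrew n).symm)
    have habs : Summable (fun n =>
        |lam ^ (d+n+1) * MString.smIter S (n+1) (MString.G S d) x|) :=
      Summable.of_nonneg_of_le (fun n => abs_nonneg _) hab hsumb
    have hexp : (∑' n : ℕ, (lam * MString.F S x) ^ n / (n.factorial : ℝ))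
        = Real.exp (lam * MString.F S x) := by
      rw [Real.exp_eq_exp_ℝ, NormedSpace.exp_eq_tsum_div]
    have hE0 : MString.E S 0 lam x = Real.exp (lam * MString.F S x) := by
      rw [MString.E]
      norm_num
    rw [hphi]
    calc |∑' n : ℕ, lam ^ (d + n + 1) * MString.smIter S (n + 1) (MString.G S d) x|
        ≤ ∑' n : ℕ, |lam ^ (d + n + 1) * MString.smIter S (n + 1) (MString.G S d) x| := by
          have habs' : Summable (fun n =>
              ‖lam ^ (d+n+1) * MString.smIter S (n+1) (MString.G S d) x‖) := by
            simp only [Real.norm_eq_abs]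
            exact habs
          have := norm_tsum_le_tsum_norm habs'
          simp only [Real.norm_eq_abs] at this
          exact this
      _ ≤ ∑' n, b n := habs.tsum_le_tsum hab hsumb
      _ = (lam ^ (d+1) * x * C) * ∑' n : ℕ, ((lam * MString.F S x) ^ n / (n.factorial : ℝ)) := by
          rw [tsum_congr hrew, tsum_mul_left]
      _ = x * lam ^ (d + 1) * C * MString.E S 0 lam x := by
          rw [hexp, hE0]
          ring
end

section
/- Let m ∈ 𝓜 and let k ≥ 1 be an integer. Then the function (−1)^k G^k_m is nondecreasing and concave on [0,1]. In particular, for all 0 < x < y ≤ 1, (−1)^k G^k_m(y)/y ≤ (−1)^k G^k_m(x)/x. -/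
open MeasureTheory Filter Topology Set
open scoped ENNReal NNReal

section Aux

open MeasureTheory Set

namespace MString

variable (S : MString)

lemma m_le_one {y : ℝ} (hy : y ∈ Set.Ioc (0:ℝ) 1) : S.m y ≤ S.m 1 :=
  S.strict_mono.monotoneOn hy.1 (by norm_num) hy.2

lemma sigmaFinite_restrict : SigmaFinite (S.μ.restrict (Set.Ioc (0:ℝ) 1)) := by
  refine ⟨⟨⟨fun n => Set.Ioc (1/(n+1) : ℝ) 1 ∪ (Set.Ioc (0:ℝ) 1)ᶜ, fun _ => trivial, ?_, ?_⟩⟩⟩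
  · intro n
    have hpos : (0:ℝ) < 1/(n+1) := by positivity
    have hle : (1:ℝ)/(n+1) ≤ 1 := by
      rw [div_le_one (by positivity)]
      exact le_add_of_nonneg_left (Nat.cast_nonneg n)
    rw [Measure.restrict_apply' measurableSet_Ioc]
    have heq : (Set.Ioc (1/(n+1):ℝ) 1 ∪ (Set.Ioc (0:ℝ) 1)ᶜ) ∩ Set.Ioc (0:ℝ) 1
        = Set.Ioc (1/(n+1):ℝ) 1 := by
      rw [Set.union_inter_distrib_right, Set.compl_inter_self, Set.union_empty,
        Set.inter_eq_left]
      exact Set.Ioc_subset_Ioc hpos.le le_rfl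
    rw [heq, S.stieltjes _ 1 hpos hle]
    exact ENNReal.ofReal_lt_top
  · rw [Set.eq_univ_iff_forall]
    intro x
    by_cases hx : x ∈ Set.Ioc (0:ℝ) 1
    · obtain ⟨n, hn⟩ := exists_nat_one_div_lt hx.1
      exact Set.mem_iUnion.2 ⟨n, Or.inl ⟨hn, hx.2⟩⟩
    · exact Set.mem_iUnion.2 ⟨0, Or.inr hx⟩

lemma base_int : MeasureTheory.IntegrableOn (fun y => S.m 1 - S.m y) (Set.Ioc (0:ℝ) 1) := by
  have hanti : AntitoneOn (fun y => S.m 1 - S.m y) (Set.Ioc (0:ℝ) 1) := by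
    intro a ha b hb hab
    have := S.strict_mono.monotoneOn ha.1 hb.1 hab
    simp only
    linarith
  have hmeas := (aemeasurable_restrict_of_antitoneOn (μ := volume) measurableSet_Ioc hanti).aestronglyMeasurable
  refine ⟨hmeas, ?_⟩
  have hnn : 0 ≤ᵐ[volume.restrict (Set.Ioc (0:ℝ) 1)] fun y => S.m 1 - S.m y := by
    rw [Filter.EventuallyLE, ae_restrict_iff' measurableSet_Ioc]
    refine ae_of_all _ fun y hy => ?_
    simp only [Pi.zero_apply]
    exact sub_nonneg.2 (S.m_le_one hy)
  rw [hasFiniteIntegral_iff_ofReal hnn]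
  haveI := S.sigmaFinite_restrict
  set F : ℝ → ℝ → ℝ≥0∞ := fun y x => ({p : ℝ × ℝ | p.1 < p.2}).indicator (fun _ => 1) (y, x)
    with hF
  have hFmeas : AEMeasurable (Function.uncurry F)
      ((volume.restrict (Set.Ioc (0:ℝ) 1)).prod (S.μ.restrict (Set.Ioc (0:ℝ) 1))) := by
    apply Measurable.aemeasurable
    have huncurry : Function.uncurry F = ({p : ℝ × ℝ | p.1 < p.2}).indicator (fun _ => 1) := rfl
    rw [huncurry]
    exact measurable_const.indicator (measurableSet_lt measurable_fst measurable_snd)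
  have key : ∫⁻ y in Set.Ioc (0:ℝ) 1, ENNReal.ofReal (S.m 1 - S.m y)
      = ∫⁻ y in Set.Ioc (0:ℝ) 1, ∫⁻ x in Set.Ioc (0:ℝ) 1, F y x ∂S.μ := by
    refine setLIntegral_congr_fun measurableSet_Ioc (fun y hy => ?_)
    have h1 : ∫⁻ x in Set.Ioc (0:ℝ) 1, F y x ∂S.μ
        = S.μ.restrict (Set.Ioc (0:ℝ) 1) (Set.Ioi y) := by
      rw [← lintegral_indicator_one measurableSet_Ioi]
      rfl
    rw [h1, Measure.restrict_apply measurableSet_Ioi]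
    have h2 : Set.Ioi y ∩ Set.Ioc (0:ℝ) 1 = Set.Ioc y 1 := by
      ext x
      constructor
      · rintro ⟨hx1, _, hx2⟩
        exact ⟨hx1, hx2⟩
      · intro hx
        exact ⟨hx.1, lt_trans hy.1 hx.1, hx.2⟩
    rw [h2, ← S.stieltjes y 1 hy.1 hy.2]
  rw [key, lintegral_lintegral_swap hFmeas]
  have key2 : ∫⁻ x in Set.Ioc (0:ℝ) 1, (∫⁻ y in Set.Ioc (0:ℝ) 1, F y x) ∂S.μ
      = ∫⁻ x in Set.Ioc (0:ℝ) 1, ENNReal.ofReal x ∂S.μ := by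
    refine setLIntegral_congr_fun measurableSet_Ioc (fun x hx => ?_)
    have h1 : ∫⁻ y in Set.Ioc (0:ℝ) 1, F y x
        = volume.restrict (Set.Ioc (0:ℝ) 1) (Set.Iio x) := by
      rw [← lintegral_indicator_one measurableSet_Iio]
      rfl
    rw [h1, Measure.restrict_apply measurableSet_Iio]
    have h2 : Set.Iio x ∩ Set.Ioc (0:ℝ) 1 = Set.Ioo 0 x := by
      ext y
      constructor
      · rintro ⟨hy1, hy2, _⟩
        exact ⟨hy2, hy1⟩
      · intro hy
        exact ⟨hy.2, hy.1, le_trans (le_of_lt hy.2) hx.2⟩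
    rw [h2, Real.volume_Ioo, sub_zero]
  rw [key2]
  exact S.int_fin

end MString

lemma core {g : ℝ → ℝ} (hint : MeasureTheory.IntegrableOn g (Set.Ioc (0:ℝ) 1))
    (hpos : ∀ y ∈ Set.Ioc (0:ℝ) 1, 0 ≤ g y) (hanti : AntitoneOn g (Set.Ioc (0:ℝ) 1)) :
    MonotoneOn (fun x => ∫ y in (0:ℝ)..x, g y) (Set.Icc (0:ℝ) 1) ∧
    ConcaveOn ℝ (Set.Icc (0:ℝ) 1) (fun x => ∫ y in (0:ℝ)..x, g y) ∧
    ContinuousOn (fun x => ∫ y in (0:ℝ)..x, g y) (Set.Icc (0:ℝ) 1) := by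
  set f := fun x => ∫ y in (0:ℝ)..x, g y with hf
  have hint' : ∀ a b : ℝ, 0 ≤ a → b ≤ 1 → MeasureTheory.IntegrableOn g (Set.Ioc a b) :=
    fun a b ha hb => hint.mono_set (Set.Ioc_subset_Ioc ha hb)
  have key : ∀ x₁ x₂ : ℝ, 0 ≤ x₁ → x₁ ≤ x₂ → x₂ ≤ 1 →
      f x₂ - f x₁ = ∫ y in Set.Ioc x₁ x₂, g y := by
    intro x₁ x₂ h0 h12 h21
    have e1 : f x₁ = ∫ y in Set.Ioc 0 x₁, g y := intervalIntegral.integral_of_le h0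
    have e2 : f x₂ = ∫ y in Set.Ioc 0 x₂, g y := intervalIntegral.integral_of_le (le_trans h0 h12)
    have e3 : (∫ y in Set.Ioc (0:ℝ) x₂, g y)
        = (∫ y in Set.Ioc (0:ℝ) x₁, g y) + ∫ y in Set.Ioc x₁ x₂, g y := by
      rw [← MeasureTheory.setIntegral_union (Set.Ioc_disjoint_Ioc_of_le le_rfl) measurableSet_Ioc
        (hint' 0 x₁ le_rfl (le_trans h12 h21)) (hint' x₁ x₂ h0 h21),
        Set.Ioc_union_Ioc_eq_Ioc h0 h12]
    rw [e1, e2, e3]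
    ring
  have mono : MonotoneOn f (Set.Icc (0:ℝ) 1) := by
    intro x₁ hx₁ x₂ hx₂ h12
    have hkey := key x₁ x₂ hx₁.1 h12 hx₂.2
    have hnn : 0 ≤ ∫ y in Set.Ioc x₁ x₂, g y :=
      MeasureTheory.setIntegral_nonneg measurableSet_Ioc
        (fun y hy => hpos y ⟨lt_of_le_of_lt hx₁.1 hy.1, le_trans hy.2 hx₂.2⟩)
    linarith
  have main : ∀ x₁ x₂ a b : ℝ, x₁ ∈ Set.Icc (0:ℝ) 1 → x₂ ∈ Set.Icc (0:ℝ) 1 → x₁ ≤ x₂ →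
      0 ≤ a → 0 ≤ b → a + b = 1 → a * f x₁ + b * f x₂ ≤ f (a * x₁ + b * x₂) := by
    intro x₁ x₂ a b hx₁ hx₂ h12 ha hb hab
    set z := a * x₁ + b * x₂ with hz
    have hz1 : x₁ ≤ z := by nlinarith [hx₁.1, hx₂.1]
    have hz2 : z ≤ x₂ := by nlinarith [hx₁.1, hx₂.1]
    rcases eq_or_lt_of_le (le_trans hx₁.1 hz1) with h0z | h0z
    · have hx10 : x₁ = 0 := le_antisymm (by linarith) hx₁.1
      have hf0 : f 0 = 0 := intervalIntegral.integral_same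
      have hbx2 : b * x₂ = 0 := by
        have hzz := hz
        rw [hx10, mul_zero, zero_add] at hzz
        linarith [h0z]
      rcases mul_eq_zero.mp hbx2 with hb0 | hx20
      · rw [← h0z, hx10, hb0, hf0]
        simp
      · rw [← h0z, hx10, hx20, hf0]
        simp
    · have hzmem : z ∈ Set.Ioc (0:ℝ) 1 := ⟨h0z, le_trans hz2 hx₂.2⟩
      have hsub1 : Set.Ioc x₁ z ⊆ Set.Ioc (0:ℝ) 1 := Set.Ioc_subset_Ioc hx₁.1 hzmem.2
      have hsub2 : Set.Ioc z x₂ ⊆ Set.Ioc (0:ℝ) 1 := Set.Ioc_subset_Ioc h0z.le hx₂.2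
      have ineq1 : (z - x₁) * g z ≤ ∫ y in Set.Ioc x₁ z, g y := by
        have hc : (∫ _ in Set.Ioc x₁ z, g z) = (z - x₁) * g z := by
          rw [MeasureTheory.setIntegral_const, measureReal_def, Real.volume_Ioc,
            ENNReal.toReal_ofReal (by linarith), smul_eq_mul]
        rw [← hc]
        refine MeasureTheory.setIntegral_mono_on
          (MeasureTheory.integrableOn_const (ne_of_lt ?_))
          (hint' x₁ z hx₁.1 hzmem.2) measurableSet_Ioc ?_
        · rw [Real.volume_Ioc]
          exact ENNReal.ofReal_lt_top
        · intro y hy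
          exact hanti (hsub1 hy) hzmem hy.2
      have ineq2 : (∫ y in Set.Ioc z x₂, g y) ≤ (x₂ - z) * g z := by
        have hc : (∫ _ in Set.Ioc z x₂, g z) = (x₂ - z) * g z := by
          rw [MeasureTheory.setIntegral_const, measureReal_def, Real.volume_Ioc,
            ENNReal.toReal_ofReal (by linarith), smul_eq_mul]
        rw [← hc]
        refine MeasureTheory.setIntegral_mono_on (hint' z x₂ h0z.le hx₂.2)
          (MeasureTheory.integrableOn_const (ne_of_lt ?_)) measurableSet_Ioc ?_
        · rw [Real.volume_Ioc]
          exact ENNReal.ofReal_lt_top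
        · intro y hy
          exact hanti hzmem (hsub2 hy) hy.1.le
      have k1 := key x₁ z hx₁.1 hz1 hzmem.2
      have k2 := key z x₂ (le_trans hx₁.1 hz1) hz2 hx₂.2
      have e1 : (z - x₁) * g z ≤ f z - f x₁ := by rw [k1]; exact ineq1
      have e2 : f x₂ - f z ≤ (x₂ - z) * g z := by rw [k2]; exact ineq2
      have hza : z - x₁ = b * (x₂ - x₁) := by
        rw [hz]
        linear_combination x₁ * hab
      have hzb : x₂ - z = a * (x₂ - x₁) := by
        rw [hz]
        linear_combination (-x₂) * hab
      rw [hza] at e1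
      rw [hzb] at e2
      have hyp1 := mul_le_mul_of_nonneg_left e1 ha
      have hyp2 := mul_le_mul_of_nonneg_left e2 hb
      have hsum : a * f z + b * f z = f z := by rw [← add_mul, hab, one_mul]
      nlinarith [hyp1, hyp2, hsum]
  have conc : ConcaveOn ℝ (Set.Icc (0:ℝ) 1) f := by
    refine ⟨convex_Icc 0 1, ?_⟩
    intro x hx y hy a b ha hb hab
    simp only [smul_eq_mul]
    rcases le_total x y with h | h
    · exact main x y a b hx hy h ha hb hab
    · have h2 := main y x b a hy hx h hb ha (by linarith)
      have h3 : b * y + a * x = a * x + b * y := by ring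
      rw [h3] at h2
      linarith
  have cont : ContinuousOn f (Set.Icc (0:ℝ) 1) := by
    have hicc : MeasureTheory.IntegrableOn g (Set.Icc (0:ℝ) 1) :=
      (integrableOn_Icc_iff_integrableOn_Ioc enorm_ne_top).2 hint
    have hc := intervalIntegral.continuousOn_primitive (f := g) (μ := volume) (a := 0) (b := 1) hicc
    exact hc.congr fun x hx => intervalIntegral.integral_of_le hx.1
  exact ⟨mono, conc, cont⟩

lemma ratio {f : ℝ → ℝ} (hconc : ConcaveOn ℝ (Set.Icc (0:ℝ) 1) f) (h0 : f 0 = 0)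
    {x y : ℝ} (hx : 0 < x) (hxy : x < y) (hy : y ≤ 1) : f y / y ≤ f x / x := by
  have hy0 : 0 < y := hx.trans hxy
  have hmem0 : (0:ℝ) ∈ Set.Icc (0:ℝ) 1 := ⟨le_rfl, zero_le_one⟩
  have hmemy : y ∈ Set.Icc (0:ℝ) 1 := ⟨hy0.le, hy⟩
  have ha : 0 ≤ 1 - x / y := by
    have : x / y ≤ 1 := (div_le_one hy0).2 hxy.le
    linarith
  have hb : 0 ≤ x / y := div_nonneg hx.le hy0.le
  have h2 := hconc.2 hmem0 hmemy ha hb (by ring)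
  simp only [smul_eq_mul, h0, mul_zero, zero_add] at h2
  rw [div_mul_cancel₀ x (ne_of_gt hy0)] at h2
  rw [div_le_div_iff₀ hy0 hx]
  have h3 := mul_le_mul_of_nonneg_right h2 hy0.le
  have h4 : x / y * f y * y = f y * x := by
    field_simp
  linarith [h3, h4.symm.le, h4.le]

namespace MString

lemma rep (S : MString) : ∀ k : ℕ, ∃ g : ℝ → ℝ,
    MeasureTheory.IntegrableOn g (Set.Ioc (0:ℝ) 1) ∧
    (∀ y ∈ Set.Ioc (0:ℝ) 1, 0 ≤ g y) ∧
    AntitoneOn g (Set.Ioc (0:ℝ) 1) ∧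
    ∀ x : ℝ, (-1:ℝ) ^ (k+1) * G S (k+1) x = ∫ y in (0:ℝ)..x, g y := by
  intro k
  induction k with
  | zero =>
    refine ⟨fun y => S.m 1 - S.m y, S.base_int,
      fun y hy => sub_nonneg.2 (S.m_le_one hy), ?_, ?_⟩
    · intro a ha b hb hab
      have := S.strict_mono.monotoneOn ha.1 hb.1 hab
      simp only
      linarith
    · intro x
      have h1 : G S 1 x = ∫ y in (0:ℝ)..x, mtilde S y := rfl
      rw [h1, pow_one, neg_one_mul, ← intervalIntegral.integral_neg]
      refine intervalIntegral.integral_congr fun y _ => ?_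
      simp only [MString.mtilde]
      ring
  | succ k ih =>
    obtain ⟨gk, hgint, hgpos, hganti, hgeq⟩ := ih
    set h : ℝ → ℝ := fun x => (-1:ℝ)^(k+1) * G S (k+1) x with hh
    have hfun : h = fun x => ∫ y in (0:ℝ)..x, gk y := funext hgeq
    obtain ⟨hmono, hconc, hcont⟩ := core hgint hgpos hganti
    rw [← hfun] at hmono hconc hcont
    have h0 : h 0 = 0 := by
      rw [hfun]
      exact intervalIntegral.integral_same
    have hnn : ∀ z ∈ Set.Icc (0:ℝ) 1, 0 ≤ h z := fun z hz =>
      h0 ▸ hmono (Set.left_mem_Icc.2 zero_le_one) hz hz.1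
    have hle : ∀ z ∈ Set.Icc (0:ℝ) 1, h z ≤ h 1 := fun z hz =>
      hmono hz (Set.right_mem_Icc.2 zero_le_one) hz.2
    have hμint : ∀ y : ℝ, 0 < y → y ≤ 1 → MeasureTheory.IntegrableOn h (Set.Ioc y 1) S.μ := by
      intro y hy0 hy1
      have hsub : Set.Ioc y 1 ⊆ Set.Icc (0:ℝ) 1 := fun z hz => ⟨(hy0.trans hz.1).le, hz.2⟩
      have hfin : S.μ (Set.Ioc y 1) < ⊤ := by
        rw [S.stieltjes y 1 hy0 hy1]
        exact ENNReal.ofReal_lt_top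
      refine ⟨(hcont.mono hsub).aestronglyMeasurable measurableSet_Ioc, ?_⟩
      refine MeasureTheory.HasFiniteIntegral.restrict_of_bounded (C := h 1) hfin ?_
      rw [MeasureTheory.ae_restrict_iff' measurableSet_Ioc]
      refine MeasureTheory.ae_of_all _ fun z hz => ?_
      rw [Real.norm_eq_abs, abs_of_nonneg (hnn z (hsub hz))]
      exact hle z (hsub hz)
    set G' : ℝ → ℝ := fun y => (-1:ℝ)^(k+1) * jInt S (G S (k+1)) y with hG'
    have hrw : ∀ y ∈ Set.Ioc (0:ℝ) 1, G' y = ∫ z in Set.Ioc y 1, h z ∂S.μ := by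
      intro y hy
      have hj : jInt S (G S (k+1)) y = ∫ z in Set.Ioc y 1, G S (k+1) z ∂S.μ := by
        simp only [MString.jInt]
        rw [if_pos hy.2]
      rw [hG']
      simp only
      rw [hj, ← MeasureTheory.integral_const_mul]
    have hpos' : ∀ y ∈ Set.Ioc (0:ℝ) 1, 0 ≤ G' y := by
      intro y hy
      rw [hrw y hy]
      exact MeasureTheory.setIntegral_nonneg measurableSet_Ioc
        (fun z hz => hnn z ⟨(hy.1.trans hz.1).le, hz.2⟩)
    have hanti' : AntitoneOn G' (Set.Ioc (0:ℝ) 1) := by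
      intro y₁ h₁ y₂ h₂ h12
      rw [hrw y₁ h₁, hrw y₂ h₂]
      refine MeasureTheory.setIntegral_mono_set (hμint y₁ h₁.1 h₁.2) ?_
        ((Set.Ioc_subset_Ioc h12 le_rfl).eventuallyLE)
      rw [Filter.EventuallyLE, MeasureTheory.ae_restrict_iff' measurableSet_Ioc]
      exact MeasureTheory.ae_of_all _ fun z hz => hnn z ⟨(h₁.1.trans hz.1).le, hz.2⟩
    have hbound' : ∀ y ∈ Set.Ioc (0:ℝ) 1, G' y ≤ h 1 * (S.m 1 - S.m y) := by
      intro y hy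
      have hfin : S.μ (Set.Ioc y 1) < ⊤ := by
        rw [S.stieltjes y 1 hy.1 hy.2]
        exact ENNReal.ofReal_lt_top
      rw [hrw y hy]
      calc (∫ z in Set.Ioc y 1, h z ∂S.μ) ≤ ∫ _ in Set.Ioc y 1, h 1 ∂S.μ :=
            MeasureTheory.setIntegral_mono_on (hμint y hy.1 hy.2)
              (MeasureTheory.integrableOn_const hfin.ne) measurableSet_Ioc
              (fun z hz => hle z ⟨(hy.1.trans hz.1).le, hz.2⟩)
        _ = (S.μ (Set.Ioc y 1)).toReal * h 1 := by
            rw [MeasureTheory.setIntegral_const, smul_eq_mul, measureReal_def]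
        _ = (S.m 1 - S.m y) * h 1 := by
            rw [S.stieltjes y 1 hy.1 hy.2,
              ENNReal.toReal_ofReal (sub_nonneg.2 (S.m_le_one hy))]
        _ = h 1 * (S.m 1 - S.m y) := mul_comm _ _
    have hint' : MeasureTheory.IntegrableOn G' (Set.Ioc (0:ℝ) 1) := by
      have hmaj : MeasureTheory.Integrable (fun y => h 1 * (S.m 1 - S.m y))
          (volume.restrict (Set.Ioc (0:ℝ) 1)) := S.base_int.const_mul (h 1)
      refine MeasureTheory.Integrable.mono' hmaj
        ((aemeasurable_restrict_of_antitoneOn measurableSet_Ioc hanti').aestronglyMeasurable) ?_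
      rw [MeasureTheory.ae_restrict_iff' measurableSet_Ioc]
      refine MeasureTheory.ae_of_all _ fun y hy => ?_
      rw [Real.norm_eq_abs, abs_of_nonneg (hpos' y hy)]
      exact hbound' y hy
    refine ⟨G', hint', hpos', hanti', ?_⟩
    intro x
    have hGdef : G S (k+1+1) x = - ∫ y in (0:ℝ)..x, jInt S (G S (k+1)) y := rfl
    rw [hGdef]
    have hpow : (-1:ℝ)^(k+1+1) * -(∫ y in (0:ℝ)..x, jInt S (G S (k+1)) y)
        = (-1:ℝ)^(k+1) * ∫ y in (0:ℝ)..x, jInt S (G S (k+1)) y := by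
      rw [pow_succ]
      ring
    rw [hpow, ← intervalIntegral.integral_const_mul]

end MString

end Aux

theorem stmt6 (S : MString) (k : ℕ) (hk : 1 ≤ k) :
    MonotoneOn (fun x => (-1 : ℝ) ^ k * MString.G S k x) (Set.Icc (0:ℝ) 1) ∧
    ConcaveOn ℝ (Set.Icc (0:ℝ) 1) (fun x => (-1 : ℝ) ^ k * MString.G S k x) ∧
    (∀ x y : ℝ, 0 < x → x < y → y ≤ 1 →
      (-1 : ℝ) ^ k * MString.G S k y / y ≤ (-1 : ℝ) ^ k * MString.G S k x / x) := by
  obtain ⟨j, rfl⟩ : ∃ j, k = j + 1 := ⟨k - 1, (Nat.succ_pred_eq_of_pos hk).symm⟩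
  obtain ⟨g, hint, hpos, hanti, heq⟩ := MString.rep S j
  have hfun : (fun x => (-1 : ℝ) ^ (j+1) * MString.G S (j+1) x)
      = fun x => ∫ y in (0:ℝ)..x, g y := funext heq
  obtain ⟨hmono, hconc, _⟩ := core hint hpos hanti
  have hmono' : MonotoneOn (fun x => (-1 : ℝ) ^ (j+1) * MString.G S (j+1) x)
      (Set.Icc (0:ℝ) 1) := by
    rw [hfun]
    exact hmono
  have hconc' : ConcaveOn ℝ (Set.Icc (0:ℝ) 1)
      (fun x => (-1 : ℝ) ^ (j+1) * MString.G S (j+1) x) := by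
    rw [hfun]
    exact hconc
  refine ⟨hmono', hconc', ?_⟩
  intro x y hx hxy hy
  have h0 : (-1 : ℝ) ^ (j+1) * MString.G S (j+1) 0 = 0 := by
    rw [heq 0]
    exact intervalIntegral.integral_same
  exact ratio hconc' h0 hx hxy hy
end

section
/- Let m ∈ 𝓜. Then for every integer k with 1 ≤ k ≤ d(m), lim_{x→0+} (−1)^k G^k_m(x)/x = ∞. -/
open MeasureTheory Filter Topology Set
open scoped ENNReal NNReal

namespace StrPf
variable (S : MString)

noncomputable def A : ℝ≥0∞ := ∫⁻ x in Set.Ioc (0:ℝ) 1, ENNReal.ofReal x ∂S.μ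

lemma A_ne_top : A S ≠ ⊤ := S.int_fin.ne

noncomputable def Fk : ℕ → ℝ → ℝ≥0∞
  | 0 => fun y => S.μ (Set.Ioc y 1)
  | (j+1) => fun y => ∫⁻ w in Set.Ioc y 1, (∫⁻ t in Set.Ioc (0:ℝ) w, Fk j t) ∂S.μ

noncomputable def Gk (j : ℕ) (x : ℝ) : ℝ≥0∞ := ∫⁻ y in Set.Ioc (0:ℝ) x, Fk S j y

lemma Fk_succ (j : ℕ) (y : ℝ) : Fk S (j+1) y = ∫⁻ w in Set.Ioc y 1, Gk S j w ∂S.μ := rfl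

lemma Fk_antitone (j : ℕ) : Antitone (Fk S j) := by
  cases j with
  | zero => exact fun a b hab => measure_mono (Set.Ioc_subset_Ioc_left hab)
  | succ j => exact fun a b hab => lintegral_mono_set (Set.Ioc_subset_Ioc_left hab)

lemma Fk_measurable (j : ℕ) : Measurable (Fk S j) := (Fk_antitone S j).measurable

lemma Gk_mono (j : ℕ) : Monotone (Gk S j) :=
  fun _ _ hab => lintegral_mono_set (Set.Ioc_subset_Ioc_right hab)

lemma Gk_measurable (j : ℕ) : Measurable (Gk S j) := (Gk_mono S j).measurable

lemma iUnion_Ioc : (⋃ n : ℕ, Set.Ioc ((n+1:ℝ))⁻¹ 1) = Set.Ioc (0:ℝ) 1 := by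
  apply Set.Subset.antisymm
  · refine Set.iUnion_subset fun n => Set.Ioc_subset_Ioc_left (by positivity)
  · intro y hy
    obtain ⟨n, hn⟩ := exists_nat_one_div_lt hy.1
    exact Set.mem_iUnion.2 ⟨n, ⟨by rw [inv_eq_one_div]; exact hn, hy.2⟩⟩

instance sfin : SigmaFinite (S.μ.restrict (Set.Ioc (0:ℝ) 1)) := by
  refine ⟨⟨⟨fun n => Set.Ioc ((n+1:ℝ))⁻¹ 1 ∪ (Set.Ioc (0:ℝ) 1)ᶜ, fun _ => trivial, ?_, ?_⟩⟩⟩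
  · intro n
    have h1 : (0:ℝ) < ((n:ℝ)+1)⁻¹ := by positivity
    rw [Measure.restrict_apply' measurableSet_Ioc, Set.union_inter_distrib_right,
      Set.compl_inter_self, Set.union_empty]
    refine lt_of_le_of_lt (measure_mono Set.inter_subset_left) ?_
    rw [S.stieltjes _ 1 h1 (by
      rw [inv_le_one_iff₀]; right; linarith [Nat.cast_nonneg (α := ℝ) n])]
    exact ENNReal.ofReal_lt_top
  · rw [← Set.iUnion_union, iUnion_Ioc, Set.union_compl_self]

lemma swap_le (g : ℝ → ℝ≥0∞) (hg : Measurable g) {x : ℝ} (hx : 0 < x) (hx1 : x ≤ 1) :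
    (∫⁻ y in Set.Ioc (0:ℝ) x, (∫⁻ w in Set.Ioc y 1, g w ∂S.μ)) ≤
      ∫⁻ w in Set.Ioc (0:ℝ) 1, ENNReal.ofReal w * g w ∂S.μ := by
  have hF : Measurable (Function.uncurry fun (y w : ℝ) => if y < w then g w else 0) := by
    exact Measurable.ite (measurableSet_lt measurable_fst measurable_snd)
      (hg.comp measurable_snd) measurable_const
  have step1 : (∫⁻ y in Set.Ioc (0:ℝ) x, (∫⁻ w in Set.Ioc y 1, g w ∂S.μ)) =
      ∫⁻ y in Set.Ioc (0:ℝ) x, (∫⁻ w in Set.Ioc (0:ℝ) 1, (if y < w then g w else 0) ∂S.μ) := by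
    refine setLIntegral_congr_fun measurableSet_Ioc (fun y hy => ?_)
    have : (fun w => if y < w then g w else 0) = (Set.Ioi y).indicator g := by
      ext w; simp [Set.indicator_apply, Set.mem_Ioi]
    rw [this, lintegral_indicator measurableSet_Ioi,
      Measure.restrict_restrict measurableSet_Ioi,
      show Set.Ioi y ∩ Set.Ioc 0 1 = Set.Ioc y 1 from Set.ext fun z =>
        ⟨fun ⟨h1, _, h3⟩ => ⟨h1, h3⟩, fun ⟨h1, h2⟩ => ⟨h1, lt_trans hy.1 h1, h2⟩⟩]
  rw [step1, lintegral_lintegral_swap hF.aemeasurable]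
  refine lintegral_mono_ae (ae_of_all _ fun w => ?_)
  have : (fun y => if y < w then g w else 0) = (Set.Iio w).indicator (fun _ => g w) := by
    ext y; simp [Set.indicator_apply, Set.mem_Iio]
  rw [this, lintegral_indicator measurableSet_Iio,
    Measure.restrict_restrict measurableSet_Iio, setLIntegral_const, mul_comm]
  refine mul_le_mul_left ?_ _
  calc volume (Set.Iio w ∩ Set.Ioc 0 x) ≤ volume (Set.Ioc 0 w) := by
        refine measure_mono fun z ⟨h1, h2, _⟩ => ⟨h2, le_of_lt h1⟩
    _ = ENNReal.ofReal w := by rw [Real.volume_Ioc, sub_zero]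

lemma Gk_le (j : ℕ) : ∀ x ∈ Set.Ioc (0:ℝ) 1, Gk S j x ≤ (A S)^(j+1) := by
  induction j with
  | zero =>
    intro x hx
    have : Gk S 0 x = ∫⁻ y in Set.Ioc (0:ℝ) x, (∫⁻ w in Set.Ioc y 1, (1:ℝ≥0∞) ∂S.μ) := by
      refine setLIntegral_congr_fun measurableSet_Ioc (fun y _ => ?_)
      rw [setLIntegral_one]; rfl
    rw [this, pow_one]
    refine (swap_le S 1 measurable_const hx.1 hx.2).trans ?_
    refine le_of_eq (setLIntegral_congr_fun measurableSet_Ioc (fun w _ => ?_))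
    show ENNReal.ofReal w * (1:ℝ≥0∞) = _
    rw [mul_one]
  | succ j ih =>
    intro x hx
    refine (swap_le S (Gk S j) (Gk_measurable S j) hx.1 hx.2).trans ?_
    calc ∫⁻ w in Set.Ioc (0:ℝ) 1, ENNReal.ofReal w * Gk S j w ∂S.μ
        ≤ ∫⁻ w in Set.Ioc (0:ℝ) 1, ENNReal.ofReal w * (A S)^(j+1) ∂S.μ := by
          refine lintegral_mono_ae ((ae_restrict_iff' measurableSet_Ioc).2
            (ae_of_all _ fun w hw => ?_))
          exact mul_le_mul_right (ih w hw) _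
      _ = A S * (A S)^(j+1) := by rw [lintegral_mul_const _ ENNReal.measurable_ofReal]; rfl
      _ = (A S)^(j+2) := by ring

lemma Gk_ne_top (j : ℕ) {x : ℝ} (hx : x ∈ Set.Ioc (0:ℝ) 1) : Gk S j x ≠ ⊤ :=
  ((Gk_le S j x hx).trans_lt (ENNReal.pow_lt_top S.int_fin)).ne

lemma Fk_ne_top (j : ℕ) {y : ℝ} (hy : y ∈ Set.Ioc (0:ℝ) 1) : Fk S j y ≠ ⊤ := by
  cases j with
  | zero =>
    show S.μ (Set.Ioc y 1) ≠ ⊤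
    rw [S.stieltjes y 1 hy.1 hy.2]; exact ENNReal.ofReal_ne_top
  | succ j =>
    rw [Fk_succ]
    refine ne_top_of_le_ne_top ?_ (le_trans (lintegral_mono_ae
      ((ae_restrict_iff' measurableSet_Ioc).2 (ae_of_all _ fun w hw =>
        Gk_le S j w ⟨lt_trans hy.1 hw.1, hw.2⟩))) (le_of_eq (setLIntegral_const _ _)))
    exact ENNReal.mul_ne_top (ENNReal.pow_ne_top (A_ne_top S)) (by
      rw [S.stieltjes y 1 hy.1 hy.2]; exact ENNReal.ofReal_ne_top)

lemma integral_Fk_toReal (j : ℕ) {x : ℝ} (hx : x ∈ Set.Ioc (0:ℝ) 1) :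
    ∫ y in Set.Ioc (0:ℝ) x, (Fk S j y).toReal = (Gk S j x).toReal := by
  refine integral_toReal (Fk_measurable S j).aemeasurable ?_
  refine (ae_restrict_iff' measurableSet_Ioc).2 (ae_of_all _ fun y hy => ?_)
  exact lt_top_iff_ne_top.2 (Fk_ne_top S j ⟨hy.1, hy.2.trans hx.2⟩)

lemma flip_sign {a T G : ℝ} (ha : a * a = 1) (h : a * G = T) : G = a * T := by
  calc G = (a * a) * G := by rw [ha, one_mul]
    _ = a * T := by rw [mul_assoc, h]

lemma neg_one_sq_pow (n : ℕ) : ((-1:ℝ)^n) * ((-1:ℝ)^n) = 1 := by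
  rw [← pow_add]; exact Even.neg_one_pow ⟨n, by ring⟩

lemma link : ∀ (j : ℕ) (x : ℝ), 0 < x → x ≤ 1 →
    (-1:ℝ)^(j+1) * MString.G S (j+1) x = (Gk S j x).toReal := by
  intro j
  induction j with
  | zero =>
    intro x hx hx1
    have h1 : MString.G S 1 x = ∫ y in (0:ℝ)..x, MString.mtilde S y := rfl
    rw [h1, intervalIntegral.integral_of_le hx.le]
    have h2 : ∫ y in Set.Ioc (0:ℝ) x, MString.mtilde S y =
        ∫ y in Set.Ioc (0:ℝ) x, (-(Fk S 0 y).toReal) := by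
      refine setIntegral_congr_fun measurableSet_Ioc fun y hy => ?_
      have hμ : Fk S 0 y = ENNReal.ofReal (S.m 1 - S.m y) := S.stieltjes y 1 hy.1 (hy.2.trans hx1)
      have hm : S.m y ≤ S.m 1 := by
        rcases eq_or_lt_of_le (hy.2.trans hx1) with h | h
        · rw [h]
        · exact le_of_lt (S.strict_mono (Set.mem_Ioi.2 hy.1) (Set.mem_Ioi.2 one_pos) h)
      rw [hμ, ENNReal.toReal_ofReal (by linarith)]
      show S.m y - S.m 1 = _
      ring
    rw [h2, integral_neg, integral_Fk_toReal S 0 ⟨hx, hx1⟩]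
    ring
  | succ j ih =>
    intro x hx hx1
    have h1 : MString.G S (j+2) x = - ∫ y in (0:ℝ)..x, MString.jInt S (MString.G S (j+1)) y := rfl
    rw [h1, intervalIntegral.integral_of_le hx.le]
    have h2 : ∫ y in Set.Ioc (0:ℝ) x, MString.jInt S (MString.G S (j+1)) y =
        ∫ y in Set.Ioc (0:ℝ) x, ((-1:ℝ)^(j+1) * (Fk S (j+1) y).toReal) := by
      refine setIntegral_congr_fun measurableSet_Ioc fun y hy => ?_
      have hy1 : y ≤ 1 := hy.2.trans hx1
      rw [MString.jInt, if_pos hy1]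
      have h3 : ∫ z in Set.Ioc y 1, MString.G S (j+1) z ∂S.μ =
          ∫ z in Set.Ioc y 1, ((-1:ℝ)^(j+1) * (Gk S j z).toReal) ∂S.μ := by
        refine setIntegral_congr_fun measurableSet_Ioc fun z hz => ?_
        exact flip_sign (neg_one_sq_pow (j+1)) (ih z (lt_trans hy.1 hz.1) hz.2)
      rw [h3, integral_const_mul]
      congr 1
      rw [Fk_succ]
      refine integral_toReal (Gk_measurable S j).aemeasurable ?_
      refine (ae_restrict_iff' measurableSet_Ioc).2 (ae_of_all _ fun z hz => ?_)
      exact lt_top_iff_ne_top.2 (Gk_ne_top S j ⟨lt_trans hy.1 hz.1, hz.2⟩)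
    rw [h2, integral_const_mul, integral_Fk_toReal S (j+1) ⟨hx, hx1⟩]
    rw [pow_succ]
    linear_combination ((Gk S (j+1) x).toReal) * neg_one_sq_pow (j+1)

lemma mono_sets : Monotone (fun n : ℕ => Set.Ioc ((n+1:ℝ))⁻¹ 1) := by
  intro n m hnm
  refine Set.Ioc_subset_Ioc_left ?_
  have h1 : ((n:ℝ)+1) ≤ ((m:ℝ)+1) := by exact_mod_cast Nat.succ_le_succ hnm
  exact inv_anti₀ (by positivity) h1

lemma sup_aux (h : ℝ → ℝ≥0∞) (hm : Measurable h)
    (H : ∫⁻ w in Set.Ioc (0:ℝ) 1, h w ∂S.μ = ⊤) (M : ℝ≥0∞) (hM : M ≠ ⊤) :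
    ∃ n : ℕ, M < ∫⁻ w in Set.Ioc ((n+1:ℝ))⁻¹ 1, h w ∂S.μ := by
  have hν : ∀ s : Set ℝ, MeasurableSet s → (S.μ.withDensity h) s = ∫⁻ w in s, h w ∂S.μ :=
    fun s hs => withDensity_apply h hs
  have hsup : (⨆ n : ℕ, (S.μ.withDensity h) (Set.Ioc ((n+1:ℝ))⁻¹ 1)) = ⊤ := by
    rw [← Monotone.measure_iUnion (mono_sets), iUnion_Ioc, hν _ measurableSet_Ioc, H]
  have : M < ⨆ n : ℕ, (S.μ.withDensity h) (Set.Ioc ((n+1:ℝ))⁻¹ 1) := by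
    rw [hsup]; exact lt_top_iff_ne_top.2 hM
  obtain ⟨n, hn⟩ := lt_iSup_iff.mp this
  exact ⟨n, by rwa [hν _ measurableSet_Ioc] at hn⟩

end StrPf


open StrPf

theorem stmt7 (S : MString) (k : ℕ) (hk1 : 1 ≤ k) (hk2 : (k : ℕ∞) ≤ MString.dIdx S) :
    Tendsto (fun x => (-1 : ℝ) ^ k * MString.G S k x / x)
      (nhdsWithin 0 (Set.Ioi 0)) atTop := by
  classical
  by_cases hB : BddBelow (S.m '' Set.Ioc (0:ℝ) 1)
  · exfalso
    rw [MString.dIdx, if_pos hB] at hk2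
    have h0 : (k:ℕ∞) = 0 := le_antisymm hk2 zero_le
    have : k = 0 := by exact_mod_cast h0
    omega
  rw [MString.dIdx, if_neg hB] at hk2
  -- unbounded measure
  have hμtop : S.μ (Set.Ioc (0:ℝ) 1) = ⊤ := by
    by_contra hne
    refine hB ⟨S.m 1 - (S.μ (Set.Ioc (0:ℝ) 1)).toReal, ?_⟩
    rintro v ⟨y, hy, rfl⟩
    have h1 : ENNReal.ofReal (S.m 1 - S.m y) ≤ S.μ (Set.Ioc (0:ℝ) 1) := by
      rw [← S.stieltjes y 1 hy.1 hy.2]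
      exact measure_mono (Set.Ioc_subset_Ioc_left hy.1.le)
    have := (ENNReal.ofReal_le_iff_le_toReal hne).mp h1
    linarith
  have hIG : ∀ j : ℕ, 1 ≤ j → j < k → MString.intGdm S j = ⊤ := by
    intro j hj1 hjk
    by_contra hne
    have hmem : (j : ℕ∞) ∈ {n : ℕ∞ | ∃ k' : ℕ, n = (k' : ℕ∞) ∧ 1 ≤ k' ∧ MString.intGdm S k' < ⊤} :=
      ⟨j, rfl, hj1, lt_top_iff_ne_top.2 hne⟩
    have := hk2.trans (sInf_le hmem)
    have : k ≤ j := by exact_mod_cast this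
    omega
  obtain ⟨j, rfl⟩ : ∃ j, k = j + 1 := ⟨k - 1, (Nat.succ_pred_eq_of_pos hk1).symm⟩
  -- divergence of Fk S j near 0
  have Htot : ∀ M : ℝ, ∃ n : ℕ, ENNReal.ofReal M < Fk S j (((n:ℝ)+1))⁻¹ := by
    intro M
    cases j with
    | zero =>
      obtain ⟨n, hn⟩ := sup_aux S 1 measurable_const (by
        rw [show (∫⁻ w in Set.Ioc (0:ℝ) 1, (1:ℝ → ℝ≥0∞) w ∂S.μ) = S.μ (Set.Ioc (0:ℝ) 1) from
          setLIntegral_one _, hμtop]) (ENNReal.ofReal M) ENNReal.ofReal_ne_top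
      refine ⟨n, ?_⟩
      have heq : (∫⁻ w in Set.Ioc (((n:ℝ)+1))⁻¹ 1, (1:ℝ → ℝ≥0∞) w ∂S.μ) =
          Fk S 0 (((n:ℝ)+1))⁻¹ := setLIntegral_one _
      rwa [heq] at hn
    | succ i =>
      have hH : ∫⁻ w in Set.Ioc (0:ℝ) 1, Gk S i w ∂S.μ = ⊤ := by
        have h1 : ∫⁻ w in Set.Ioc (0:ℝ) 1, Gk S i w ∂S.μ = MString.intGdm S (i+1) := by
          rw [MString.intGdm]
          refine setLIntegral_congr_fun measurableSet_Ioc (fun w hw => ?_)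
          rw [StrPf.link S i w hw.1 hw.2, ENNReal.ofReal_toReal (Gk_ne_top S i hw)]
        rw [h1]
        exact hIG (i+1) le_add_self (by omega)
      obtain ⟨n, hn⟩ := sup_aux S (Gk S i) (Gk_measurable S i) hH
        (ENNReal.ofReal M) ENNReal.ofReal_ne_top
      exact ⟨n, by rwa [← Fk_succ] at hn⟩
  rw [tendsto_atTop]
  intro M
  obtain ⟨n, hn⟩ := Htot M
  have hδpos : (0:ℝ) < (((n:ℝ)+1))⁻¹ := by positivity
  have hδ1 : (((n:ℝ)+1))⁻¹ ≤ 1 := by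
    rw [inv_le_one_iff₀]; right; linarith [Nat.cast_nonneg (α := ℝ) n]
  filter_upwards [Ioo_mem_nhdsGT_of_mem (Set.mem_Ico.2 ⟨le_refl (0:ℝ), hδpos⟩)] with x hx
  have hx0 : (0:ℝ) < x := hx.1
  have hx1 : x ≤ 1 := le_trans hx.2.le hδ1
  rw [StrPf.link S j x hx0 hx1]
  have hFx : ENNReal.ofReal M < Fk S j x := lt_of_lt_of_le hn (Fk_antitone S j hx.2.le)
  have hFfin : Fk S j x ≠ ⊤ := Fk_ne_top S j ⟨hx0, hx1⟩
  have hMle : M ≤ (Fk S j x).toReal := by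
    rcases le_or_gt M 0 with h | h
    · exact h.trans ENNReal.toReal_nonneg
    · have h2 := ENNReal.toReal_mono hFfin hFx.le
      rwa [ENNReal.toReal_ofReal h.le] at h2
  have hGge : x * (Fk S j x).toReal ≤ (Gk S j x).toReal := by
    have h1 : ENNReal.ofReal x * Fk S j x ≤ Gk S j x := by
      calc ENNReal.ofReal x * Fk S j x = Fk S j x * volume (Set.Ioc (0:ℝ) x) := by
            rw [Real.volume_Ioc, sub_zero, mul_comm]
        _ = ∫⁻ _ in Set.Ioc (0:ℝ) x, Fk S j x := (setLIntegral_const _ _).symm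
        _ ≤ Gk S j x := lintegral_mono_ae ((ae_restrict_iff' measurableSet_Ioc).2
            (ae_of_all _ fun y hy => Fk_antitone S j hy.2))
    have h2 := ENNReal.toReal_mono (Gk_ne_top S j ⟨hx0, hx1⟩) h1
    rwa [ENNReal.toReal_mul, ENNReal.toReal_ofReal hx0.le] at h2
  rw [le_div_iff₀ hx0]
  nlinarith [hMle, hGge, hx0]
end

section
/- Let m ∈ 𝓜, let k ≥ 1 be an integer and let 0 ≤ x ≤ y ≤ 1. Then 0 ≤ (−1)^{k+1} G^{k+1}_m(x) ≤ (−1)^k G^k_m(x) ∫_{(0,y]} z dm(z) + x ∫_{(y,1]} (−1)^k G^k_m(z) dm(z). In particular (taking y = 1), 0 ≤ (−1)^{k+1} G^{k+1}_m(x) ≤ (−1)^k G^k_m(x) ∫_{(0,1]} z dm(z). -/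
open MeasureTheory Filter Topology Set
open scoped ENNReal NNReal

namespace MString
variable (S : MString)

lemma m_mono : MonotoneOn S.m (Set.Ioi 0) := S.strict_mono.monotoneOn

lemma lint_layer {x : ℝ} (hx : 0 < x) :
    ∫⁻ u in Set.Ioc (0:ℝ) x, ENNReal.ofReal (S.m x - S.m u) =
      ∫⁻ z in Set.Ioc (0:ℝ) x, ENNReal.ofReal z ∂S.μ := by
  have h1 : ∫⁻ z in Set.Ioc (0:ℝ) x, ENNReal.ofReal z ∂S.μ
      = ∫⁻ t in Set.Ioi (0:ℝ), (S.μ.restrict (Set.Ioc 0 x)) {a | t < a} := by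
    exact lintegral_eq_lintegral_meas_lt _
      ((ae_restrict_iff' measurableSet_Ioc).mpr (ae_of_all _ fun z hz => hz.1.le))
      aemeasurable_id
  have h2 : ∀ t ∈ Set.Ioi (0:ℝ), (S.μ.restrict (Set.Ioc 0 x)) {a | t < a}
      = ENNReal.ofReal (S.m x - S.m (min t x)) := by
    intro t ht
    have : {a : ℝ | t < a} = Set.Ioi t := rfl
    rw [this, Measure.restrict_apply measurableSet_Ioi, Set.inter_comm, Set.Ioc_inter_Ioi]
    rw [sup_eq_right.mpr (le_of_lt ht)]
    rcases le_or_gt t x with h | h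
    · rw [min_eq_left h]
      exact S.stieltjes t x ht h
    · rw [min_eq_right h.le, Set.Ioc_eq_empty h.not_gt]
      simp
  have h3 : ∫⁻ t in Set.Ioi (0:ℝ), ENNReal.ofReal (S.m x - S.m (min t x))
      = ∫⁻ t in Set.Ioc (0:ℝ) x, ENNReal.ofReal (S.m x - S.m t) := by
    rw [← Set.Ioc_union_Ioi_eq_Ioi hx.le,
      lintegral_union measurableSet_Ioi (Set.Ioc_disjoint_Ioi le_rfl)]
    have e1 : ∫⁻ t in Set.Ioc (0:ℝ) x, ENNReal.ofReal (S.m x - S.m (min t x))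
        = ∫⁻ t in Set.Ioc (0:ℝ) x, ENNReal.ofReal (S.m x - S.m t) := by
      refine setLIntegral_congr_fun measurableSet_Ioc (fun t ht => ?_)
      rw [min_eq_left ht.2]
    have e2 : ∫⁻ t in Set.Ioi x, ENNReal.ofReal (S.m x - S.m (min t x)) = 0 := by
      rw [← lintegral_zero (μ := volume.restrict (Set.Ioi x))]
      refine setLIntegral_congr_fun measurableSet_Ioi (fun t ht => ?_)
      rw [min_eq_right (le_of_lt ht), sub_self, ENNReal.ofReal_zero]
    rw [e1, e2, add_zero]
  rw [h1, setLIntegral_congr_fun measurableSet_Ioi h2, h3]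

lemma lint_fin {x : ℝ} (hx1 : x ≤ 1) :
    ∫⁻ z in Set.Ioc (0:ℝ) x, ENNReal.ofReal z ∂S.μ < ⊤ :=
  lt_of_le_of_lt (lintegral_mono_set (Set.Ioc_subset_Ioc_right hx1)) S.int_fin

lemma int_id : IntegrableOn (fun z : ℝ => z) (Set.Ioc (0:ℝ) 1) S.μ := by
  refine ⟨measurable_id.aestronglyMeasurable, ?_⟩
  have h : 0 ≤ᵐ[S.μ.restrict (Set.Ioc (0:ℝ) 1)] fun z : ℝ => z :=
    (ae_restrict_iff' measurableSet_Ioc).mpr (ae_of_all _ fun z hz => hz.1.le)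
  exact (hasFiniteIntegral_iff_ofReal h).mpr S.int_fin

lemma int_mx {x : ℝ} (hx : 0 < x) (hx1 : x ≤ 1) :
    IntegrableOn (fun u => S.m x - S.m u) (Set.Ioc (0:ℝ) x) volume := by
  have hmeas : AEMeasurable (fun u => S.m x - S.m u) (volume.restrict (Set.Ioc (0:ℝ) x)) := by
    refine (aemeasurable_const (b := S.m x)).sub ?_
    exact aemeasurable_restrict_of_monotoneOn measurableSet_Ioc
      ((S.m_mono).mono (fun u hu => hu.1))
  have hnn : 0 ≤ᵐ[volume.restrict (Set.Ioc (0:ℝ) x)] fun u => S.m x - S.m u := by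
    refine (ae_restrict_iff' measurableSet_Ioc).mpr (ae_of_all _ fun u hu => ?_)
    exact sub_nonneg.mpr (S.m_mono hu.1 hx hu.2)
  refine ⟨hmeas.aestronglyMeasurable, ?_⟩
  rw [hasFiniteIntegral_iff_ofReal hnn, S.lint_layer hx]
  exact S.lint_fin hx1

lemma int_mx_eq {x : ℝ} (hx : 0 < x) (hx1 : x ≤ 1) :
    ∫ u in Set.Ioc (0:ℝ) x, (S.m x - S.m u) = S.F x := by
  have hnn : 0 ≤ᵐ[volume.restrict (Set.Ioc (0:ℝ) x)] fun u => S.m x - S.m u := by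
    refine (ae_restrict_iff' measurableSet_Ioc).mpr (ae_of_all _ fun u hu => ?_)
    exact sub_nonneg.mpr (S.m_mono hu.1 hx hu.2)
  have hnn2 : 0 ≤ᵐ[S.μ.restrict (Set.Ioc (0:ℝ) x)] fun z : ℝ => z :=
    (ae_restrict_iff' measurableSet_Ioc).mpr (ae_of_all _ fun z hz => hz.1.le)
  rw [MeasureTheory.integral_eq_lintegral_of_nonneg_ae hnn
      (S.int_mx hx hx1).aestronglyMeasurable, S.lint_layer hx]
  rw [show S.F x = ∫ z in Set.Ioc (0:ℝ) x, z ∂S.μ from rfl,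
    MeasureTheory.integral_eq_lintegral_of_nonneg_ae hnn2 measurable_id.aestronglyMeasurable]

lemma primitive_props {w : ℝ → ℝ} {f : ℝ → ℝ}
    (hrep : ∀ x ∈ Set.Icc (0:ℝ) 1, f x = ∫ u in Set.Ioc (0:ℝ) x, w u)
    (hint : IntegrableOn w (Set.Ioc (0:ℝ) 1) volume)
    (hanti : AntitoneOn w (Set.Ioc (0:ℝ) 1))
    (hpos : ∀ u ∈ Set.Ioc (0:ℝ) 1, 0 ≤ w u) :
    (∀ x ∈ Set.Icc (0:ℝ) 1, 0 ≤ f x) ∧ MonotoneOn f (Set.Icc (0:ℝ) 1) ∧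
      (∀ x z : ℝ, 0 ≤ x → x ≤ z → z ≤ 1 → x * f z ≤ z * f x) := by
  have hsub : ∀ x : ℝ, x ≤ 1 → Set.Ioc (0:ℝ) x ⊆ Set.Ioc (0:ℝ) 1 :=
    fun x hx => Set.Ioc_subset_Ioc_right hx
  have hnn : ∀ x ∈ Set.Icc (0:ℝ) 1, 0 ≤ f x := by
    intro x hx
    rw [hrep x hx]
    exact setIntegral_nonneg measurableSet_Ioc fun u hu => hpos u (hsub x hx.2 hu)
  have hdiff : ∀ a b : ℝ, 0 ≤ a → a ≤ b → b ≤ 1 →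
      f b = f a + ∫ u in Set.Ioc a b, w u := by
    intro a b ha hab hb1
    rw [hrep a ⟨ha, hab.trans hb1⟩, hrep b ⟨ha.trans hab, hb1⟩,
      ← setIntegral_union (Set.Ioc_disjoint_Ioc_of_le le_rfl) measurableSet_Ioc
        (hint.mono_set (fun u hu => ⟨hu.1, hu.2.trans (hab.trans hb1)⟩))
        (hint.mono_set (fun u hu => ⟨ha.trans_lt hu.1, hu.2.trans hb1⟩)),
      Set.Ioc_union_Ioc_eq_Ioc ha hab]
  have hmono : MonotoneOn f (Set.Icc (0:ℝ) 1) := by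
    intro a ha b hb hab
    rw [hdiff a b ha.1 hab hb.2]
    have : 0 ≤ ∫ u in Set.Ioc a b, w u :=
      setIntegral_nonneg measurableSet_Ioc fun u hu =>
        hpos u ⟨ha.1.trans_lt hu.1, hu.2.trans hb.2⟩
    linarith
  refine ⟨hnn, hmono, fun x z hx hxz hz1 => ?_⟩
  rcases eq_or_lt_of_le hx with hx0 | hx0
  · have : f 0 = 0 := by
      rw [hrep 0 ⟨le_rfl, zero_le_one⟩, Set.Ioc_self, Measure.restrict_empty,
        integral_zero_measure]
    rw [← hx0, this]
    simp
  · have hxmem : x ∈ Set.Ioc (0:ℝ) 1 := ⟨hx0, hxz.trans hz1⟩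
    have hwx : 0 ≤ w x := hpos x hxmem
    have hub : f z ≤ f x + (z - x) * w x := by
      rw [hdiff x z hx hxz hz1]
      have h1 : ∫ u in Set.Ioc x z, w u ≤ ∫ _u in Set.Ioc x z, w x := by
        refine setIntegral_mono_on
          (hint.mono_set (fun u hu => ⟨hx0.trans hu.1, hu.2.trans hz1⟩))
          (integrableOn_const measure_Ioc_lt_top.ne)
          measurableSet_Ioc (fun u hu => ?_)
        exact hanti hxmem ⟨hx0.trans hu.1, hu.2.trans hz1⟩ hu.1.le
      have h2 : ∫ _u in Set.Ioc x z, w x = (z - x) * w x := by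
        rw [setIntegral_const, Real.volume_real_Ioc_of_le (by linarith),
          smul_eq_mul]
      linarith
    have hlb : x * w x ≤ f x := by
      rw [hrep x ⟨hx, hxz.trans hz1⟩]
      have h1 : ∫ _u in Set.Ioc (0:ℝ) x, w x ≤ ∫ u in Set.Ioc (0:ℝ) x, w u := by
        refine setIntegral_mono_on
          (integrableOn_const measure_Ioc_lt_top.ne)
          (hint.mono_set (hsub x (hxz.trans hz1)))
          measurableSet_Ioc (fun u hu => ?_)
        exact hanti ⟨hu.1, hu.2.trans (hxz.trans hz1)⟩ hxmem hu.2
      have h2 : ∫ _u in Set.Ioc (0:ℝ) x, w x = x * w x := by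
        rw [setIntegral_const, Real.volume_real_Ioc_of_le (by linarith),
          smul_eq_mul, sub_zero]
      linarith
    nlinarith [mul_le_mul_of_nonneg_left hub hx, mul_le_mul_of_nonneg_left hlb (sub_nonneg.mpr hxz)]

noncomputable def hG (S : MString) (k : ℕ) (x : ℝ) : ℝ := (-1:ℝ)^k * G S k x

lemma rep1 : ∀ x ∈ Set.Icc (0:ℝ) 1, hG S 1 x = ∫ u in Set.Ioc (0:ℝ) x, (S.m 1 - S.m u) := by
  intro x hx
  rw [hG, G]
  dsimp only
  rw [intervalIntegral.integral_of_le hx.1]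
  rw [show ∫ u in Set.Ioc (0:ℝ) x, (S.m 1 - S.m u) =
      ∫ u in Set.Ioc (0:ℝ) x, (-1 : ℝ) * mtilde S u by
    refine setIntegral_congr_fun measurableSet_Ioc fun u _ => ?_
    rw [mtilde]; ring]
  rw [MeasureTheory.integral_const_mul]
  ring

lemma repSucc (k : ℕ) (hk : 1 ≤ k) : ∀ x ∈ Set.Icc (0:ℝ) 1,
    hG S (k+1) x = ∫ u in Set.Ioc (0:ℝ) x, (∫ z in Set.Ioc u 1, hG S k z ∂S.μ) := by
  obtain ⟨j, rfl⟩ := Nat.exists_eq_add_of_le hk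
  intro x hx
  rw [show 1 + j + 1 = j + 2 from by ring, hG, G]
  dsimp only
  rw [intervalIntegral.integral_of_le hx.1]
  rw [show ∫ u in Set.Ioc (0:ℝ) x, (∫ z in Set.Ioc u 1, hG S (1+j) z ∂S.μ) =
      ∫ u in Set.Ioc (0:ℝ) x, (-1:ℝ)^(j+2) * (- jInt S (G S (j+1)) u) by
    refine setIntegral_congr_fun measurableSet_Ioc fun u hu => ?_
    rw [jInt, if_pos (hu.2.trans hx.2)]
    rw [show ∫ z in Set.Ioc u 1, hG S (1+j) z ∂S.μ =
        ∫ z in Set.Ioc u 1, (-1:ℝ)^(1+j) * G S (1+j) z ∂S.μ from rfl,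
      MeasureTheory.integral_const_mul, show (1+j) = (j+1) from by ring]
    ring]
  rw [MeasureTheory.integral_const_mul, MeasureTheory.integral_neg]

lemma G_zero (k : ℕ) (hk : 1 ≤ k) : G S k 0 = 0 := by
  obtain ⟨j, rfl⟩ := Nat.exists_eq_add_of_le hk
  match j with
  | 0 => rw [G]; dsimp only; rw [intervalIntegral.integral_same]
  | (i+1) =>
    rw [show 1 + (i+1) = i + 2 from by ring, G]; dsimp only
    rw [intervalIntegral.integral_same, neg_zero]

def Pk (S : MString) (k : ℕ) : Prop :=
  (∀ x ∈ Set.Icc (0:ℝ) 1, 0 ≤ hG S k x) ∧ MonotoneOn (hG S k) (Set.Icc (0:ℝ) 1) ∧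
    (∀ x z : ℝ, 0 ≤ x → x ≤ z → z ≤ 1 → x * hG S k z ≤ z * hG S k x)

lemma meas_Ioc_ne_top {a b : ℝ} (ha : 0 < a) : S.μ (Set.Ioc a b) ≠ ⊤ := by
  rcases le_or_gt a b with h | h
  · rw [S.stieltjes a b ha h]; exact ENNReal.ofReal_ne_top
  · rw [Set.Ioc_eq_empty h.not_gt]; simp

lemma hG_int_sub {k : ℕ} (hP : Pk S k) {u : ℝ} (hu : 0 < u) :
    IntegrableOn (hG S k) (Set.Ioc u 1) S.μ := by
  obtain ⟨ha, hb, hc⟩ := hP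
  have hmeas : AEStronglyMeasurable (hG S k) (S.μ.restrict (Set.Ioc u 1)) :=
    (aemeasurable_restrict_of_monotoneOn measurableSet_Ioc
      (hb.mono fun z hz => ⟨(hu.trans hz.1).le, hz.2⟩)).aestronglyMeasurable
  refine Integrable.mono'
    (integrableOn_const (C := hG S k 1) (S.meas_Ioc_ne_top hu))
    hmeas ?_
  refine (ae_restrict_iff' measurableSet_Ioc).mpr (ae_of_all _ fun z hz => ?_)
  rw [Real.norm_eq_abs, abs_of_nonneg (ha z ⟨(hu.trans hz.1).le, hz.2⟩)]
  exact hb ⟨(hu.trans hz.1).le, hz.2⟩ ⟨zero_le_one, le_rfl⟩ hz.2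

noncomputable def Wf (S : MString) (k : ℕ) (u : ℝ) : ℝ :=
  ∫ z in Set.Ioc u 1, hG S k z ∂S.μ

lemma Wf_anti {k : ℕ} (hP : Pk S k) : AntitoneOn (Wf S k) (Set.Ioc (0:ℝ) 1) := by
  intro u hu v hv huv
  have hsplit : Wf S k u = (∫ z in Set.Ioc u v, hG S k z ∂S.μ) + Wf S k v := by
    rw [Wf, Wf, ← setIntegral_union (Set.Ioc_disjoint_Ioc_of_le le_rfl) measurableSet_Ioc
      ((S.hG_int_sub hP hu.1).mono_set (fun z hz => ⟨hz.1, hz.2.trans hv.2⟩))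
      (S.hG_int_sub hP hv.1), Set.Ioc_union_Ioc_eq_Ioc huv hv.2]
  have hnn : 0 ≤ ∫ z in Set.Ioc u v, hG S k z ∂S.μ :=
    setIntegral_nonneg measurableSet_Ioc fun z hz =>
      hP.1 z ⟨(hu.1.trans hz.1).le, hz.2.trans hv.2⟩
  linarith
lemma Wf_nonneg {k : ℕ} (hP : Pk S k) {u : ℝ} (hu : 0 < u) : 0 ≤ Wf S k u :=
  setIntegral_nonneg measurableSet_Ioc fun z hz =>
    hP.1 z ⟨(hu.trans hz.1).le, hz.2⟩

lemma Wf_le {k : ℕ} (hP : Pk S k) {u : ℝ} (hu : 0 < u) (hu1 : u ≤ 1) :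
    Wf S k u ≤ hG S k 1 * (S.m 1 - S.m u) := by
  have h1 : Wf S k u ≤ ∫ _z in Set.Ioc u 1, hG S k 1 ∂S.μ := by
    refine setIntegral_mono_on (S.hG_int_sub hP hu)
      (integrableOn_const (S.meas_Ioc_ne_top hu))
      measurableSet_Ioc fun z hz => ?_
    exact hP.2.1 ⟨(hu.trans hz.1).le, hz.2⟩ ⟨zero_le_one, le_rfl⟩ hz.2
  have h2 : ∫ _z in Set.Ioc u 1, hG S k 1 ∂S.μ = (S.m 1 - S.m u) * hG S k 1 := by
    rw [setIntegral_const, measureReal_def, S.stieltjes u 1 hu hu1,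
      ENNReal.toReal_ofReal (sub_nonneg.mpr (S.m_mono hu (by norm_num : (1:ℝ) ∈ Set.Ioi 0) hu1)),
      smul_eq_mul]
  rw [mul_comm]; exact h1.trans_eq h2

lemma Wf_intvol {k : ℕ} (hP : Pk S k) : IntegrableOn (Wf S k) (Set.Ioc (0:ℝ) 1) volume := by
  have hnn : 0 ≤ᵐ[volume.restrict (Set.Ioc (0:ℝ) 1)] Wf S k :=
    (ae_restrict_iff' measurableSet_Ioc).mpr (ae_of_all _ fun u hu => Wf_nonneg S hP hu.1)
  refine ⟨(aemeasurable_restrict_of_antitoneOn measurableSet_Ioc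
    (Wf_anti S hP)).aestronglyMeasurable, (hasFiniteIntegral_iff_ofReal hnn).mpr ?_⟩
  have hbd : ∫⁻ u in Set.Ioc (0:ℝ) 1, ENNReal.ofReal (Wf S k u)
      ≤ ∫⁻ u in Set.Ioc (0:ℝ) 1, ENNReal.ofReal (hG S k 1) * ENNReal.ofReal (S.m 1 - S.m u) := by
    have hgm : AEMeasurable (fun u => ENNReal.ofReal (S.hG k 1) * ENNReal.ofReal (S.m 1 - S.m u))
        (volume.restrict (Set.Ioc (0:ℝ) 1)) := by
      refine aemeasurable_const.mul (ENNReal.measurable_ofReal.comp_aemeasurable ?_)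
      exact aemeasurable_const.sub
        (aemeasurable_restrict_of_monotoneOn measurableSet_Ioc ((S.m_mono).mono fun z hz => hz.1))
    refine setLIntegral_mono_ae hgm (ae_of_all _ fun u hu => ?_)
    rw [← ENNReal.ofReal_mul (hP.1 1 ⟨zero_le_one, le_rfl⟩)]
    exact ENNReal.ofReal_le_ofReal (Wf_le S hP hu.1 hu.2)
  refine lt_of_le_of_lt hbd ?_
  rw [lintegral_const_mul' _ _ ENNReal.ofReal_ne_top, S.lint_layer one_pos]
  exact ENNReal.mul_lt_top ENNReal.ofReal_lt_top (S.lint_fin le_rfl)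

lemma repSucc' {k : ℕ} (hk : 1 ≤ k) : ∀ x ∈ Set.Icc (0:ℝ) 1,
    hG S (k+1) x = ∫ u in Set.Ioc (0:ℝ) x, Wf S k u := by
  intro x hx
  exact repSucc S k hk x hx

lemma PkAll (k : ℕ) (hk : 1 ≤ k) : Pk S k := by
  induction k, hk using Nat.le_induction with
  | base =>
    refine primitive_props (rep1 S) (S.int_mx one_pos le_rfl) ?_ ?_
    · intro u hu v hv huv
      dsimp only
      have := S.m_mono hu.1 hv.1 huv
      linarith
    · intro u hu
      have := S.m_mono hu.1 (by norm_num : (1:ℝ) ∈ Set.Ioi 0) hu.2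
      linarith
  | succ k hk ih =>
    exact primitive_props (repSucc' S hk) (Wf_intvol S ih)
      (Wf_anti S ih) (fun u hu => Wf_nonneg S ih hu.1)

lemma estimate {k : ℕ} (hk : 1 ≤ k) {x y : ℝ} (hx : 0 ≤ x) (hxy : x ≤ y) (hy : y ≤ 1) :
    hG S (k+1) x ≤ hG S k x * S.F y + x * ∫ z in Set.Ioc y 1, hG S k z ∂S.μ := by
  have hP := PkAll S k hk
  have hx1 : x ≤ 1 := hxy.trans hy
  rcases eq_or_lt_of_le hx with h0 | h0
  · rw [← h0, repSucc' S hk 0 ⟨le_rfl, zero_le_one⟩, Set.Ioc_self, Measure.restrict_empty,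
      integral_zero_measure, hG, G_zero S k hk, mul_zero, zero_mul, zero_mul, add_zero]
  · have key : ∀ a b : ℝ, 0 < a → b ≤ 1 → IntegrableOn (hG S k) (Set.Ioc a b) S.μ :=
      fun a b ha hb => (S.hG_int_sub hP ha).mono_set (Set.Ioc_subset_Ioc_right hb)
    set c0 := ∫ z in Set.Ioc y 1, hG S k z ∂S.μ with hc0
    set C := ∫ z in Set.Ioc x y, hG S k z ∂S.μ with hC
    set Ixy := ∫ z in Set.Ioc x y, z ∂S.μ with hIxy
    have hy0 : 0 < y := h0.trans_le hxy
    -- pointwise bound on Wf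
    have hpt : ∀ u ∈ Set.Ioc (0:ℝ) x,
        Wf S k u ≤ hG S k x * (S.m x - S.m u) + (C + c0) := by
      intro u hu
      have hs1 : Wf S k u = (∫ z in Set.Ioc u y, hG S k z ∂S.μ) + c0 := by
        rw [Wf, ← setIntegral_union (Set.Ioc_disjoint_Ioc_of_le le_rfl) measurableSet_Ioc
          (key u y hu.1 hy) (key y 1 hy0 le_rfl),
          Set.Ioc_union_Ioc_eq_Ioc (hu.2.trans hxy) hy]
      have hs2 : ∫ z in Set.Ioc u y, hG S k z ∂S.μ
          = (∫ z in Set.Ioc u x, hG S k z ∂S.μ) + C := by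
        rw [← setIntegral_union (Set.Ioc_disjoint_Ioc_of_le le_rfl) measurableSet_Ioc
          (key u x hu.1 hx1) (key x y h0 hy), Set.Ioc_union_Ioc_eq_Ioc hu.2 hxy]
      have hB : ∫ z in Set.Ioc u x, hG S k z ∂S.μ ≤ hG S k x * (S.m x - S.m u) := by
        have h1 : ∫ z in Set.Ioc u x, hG S k z ∂S.μ ≤ ∫ _z in Set.Ioc u x, hG S k x ∂S.μ := by
          refine setIntegral_mono_on (key u x hu.1 hx1)
            (integrableOn_const (S.meas_Ioc_ne_top hu.1))
            measurableSet_Ioc fun z hz => ?_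
          exact hP.2.1 ⟨(hu.1.trans hz.1).le, hz.2.trans hx1⟩ ⟨hx, hx1⟩ hz.2
        have h2 : ∫ _z in Set.Ioc u x, hG S k x ∂S.μ = (S.m x - S.m u) * hG S k x := by
          rw [setIntegral_const, measureReal_def, S.stieltjes u x hu.1 hu.2,
            ENNReal.toReal_ofReal (sub_nonneg.mpr (S.m_mono hu.1 h0 hu.2)), smul_eq_mul]
        rw [mul_comm]; exact h1.trans_eq h2
      rw [hs1, hs2]; linarith
    -- integrate the pointwise bound
    have hrep := repSucc' S hk x ⟨hx, hx1⟩
    have hmain : hG S (k+1) x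
        ≤ ∫ u in Set.Ioc (0:ℝ) x, (hG S k x * (S.m x - S.m u) + (C + c0)) := by
      rw [hrep]
      refine setIntegral_mono_on
        ((Wf_intvol S hP).mono_set (Set.Ioc_subset_Ioc_right hx1))
        (((S.int_mx h0 hx1).const_mul _).add
          (integrableOn_const measure_Ioc_lt_top.ne))
        measurableSet_Ioc hpt
    have hval : ∫ u in Set.Ioc (0:ℝ) x, (hG S k x * (S.m x - S.m u) + (C + c0))
        = hG S k x * S.F x + x * (C + c0) := by
      rw [MeasureTheory.integral_add ((S.int_mx h0 hx1).const_mul _)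
          (integrableOn_const measure_Ioc_lt_top.ne),
        MeasureTheory.integral_const_mul, S.int_mx_eq h0 hx1, setIntegral_const,
        Real.volume_real_Ioc_of_le (by linarith), smul_eq_mul, sub_zero]
    -- bound x * C
    have hxC : x * C ≤ hG S k x * Ixy := by
      have h1 : ∫ z in Set.Ioc x y, (x * hG S k z) ∂S.μ
          ≤ ∫ z in Set.Ioc x y, (hG S k x * z) ∂S.μ := by
        refine setIntegral_mono_on ((key x y h0 hy).const_mul x)
          ((S.int_id.mono_set (Set.Ioc_subset_Ioc hx hy)).const_mul _)
          measurableSet_Ioc fun z hz => ?_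
        rw [mul_comm (hG S k x) z]
        exact hP.2.2 x z hx hz.1.le (hz.2.trans hy)
      rwa [MeasureTheory.integral_const_mul, MeasureTheory.integral_const_mul] at h1
    -- F y = F x + Ixy
    have hF : S.F y = S.F x + Ixy := by
      rw [show S.F y = ∫ z in Set.Ioc (0:ℝ) y, z ∂S.μ from rfl,
        show S.F x = ∫ z in Set.Ioc (0:ℝ) x, z ∂S.μ from rfl,
        ← setIntegral_union (Set.Ioc_disjoint_Ioc_of_le le_rfl) measurableSet_Ioc
          (S.int_id.mono_set (Set.Ioc_subset_Ioc le_rfl hx1))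
          (S.int_id.mono_set (Set.Ioc_subset_Ioc hx hy)),
        Set.Ioc_union_Ioc_eq_Ioc hx hxy]
    have hFy : hG S k x * S.F y = hG S k x * S.F x + hG S k x * Ixy := by
      rw [hF]; ring
    have hxCc : x * (C + c0) = x * C + x * c0 := by ring
    linarith

end MString

theorem stmt8 (S : MString) (k : ℕ) (hk : 1 ≤ k) (x y : ℝ) (hx : 0 ≤ x) (hxy : x ≤ y)
    (hy : y ≤ 1) :
    0 ≤ (-1 : ℝ) ^ (k + 1) * MString.G S (k + 1) x ∧
    (-1 : ℝ) ^ (k + 1) * MString.G S (k + 1) x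
      ≤ (-1 : ℝ) ^ k * MString.G S k x * MString.F S y
        + x * ∫ z in Set.Ioc y 1, (-1 : ℝ) ^ k * MString.G S k z ∂S.μ ∧
    (-1 : ℝ) ^ (k + 1) * MString.G S (k + 1) x
      ≤ (-1 : ℝ) ^ k * MString.G S k x * MString.F S 1 := by
  have hx1 : x ≤ 1 := hxy.trans hy
  refine ⟨?_, ?_, ?_⟩
  · exact (MString.PkAll S (k+1) (by omega)).1 x ⟨hx, hx1⟩
  · exact MString.estimate S hk hx hxy hy
  · have h := MString.estimate S hk (y := 1) hx hx1 le_rfl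
    rwa [Set.Ioc_self, Measure.restrict_empty, integral_zero_measure, mul_zero, add_zero] at h
end
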